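/- arXiv:math/0701284 — 2 statements merged into one kernel-verified Lean document; each statement's English description precedes it below -/
import Mathlib

section
/- There exists a constant χ₃ > 0 such that for all integers N ≥ 1 and all integers j, i with 4 ≤ j ≤ i ≤ N and j ≤ N^{2/5}, the expected hitting time satisfies E[τ_j^{(N,i)}] ≤ χ₃ N/j, where τ_j^{(N,i)} = inf{n ≥ 0 : R^{(N,i)}_n < j}. -/
open MeasureTheory Filter

universe u

/-- Stirling numbers of the second kind. -/
def stirling2 : ℕ → ℕ → ℕ
  | 0, 0 => 1
  | 0, _ + 1 => 0
  | _ + 1, 0 => 0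
  | n + 1, k + 1 => (k + 1) * stirling2 n (k + 1) + stirling2 n k

/-- The transition matrix `M^{(N)}_{q,p} = S(q,p) · (N)_p / N^q`
(`S(q,p) = 0` for `p > q`, so the entries with `p > q` vanish automatically). -/
noncomputable def transMat (N q p : ℕ) : ENNReal :=
  ((stirling2 q p * Nat.descFactorial N p : ℕ) : ENNReal) / (N : ENNReal) ^ q

/-- `R` is (a version of) the Markov chain with transition matrix `K` started at `i`:
its finite dimensional distributions are the required ones. -/
def IsMarkovChainWith {Ω : Type*} [MeasurableSpace Ω] (P : Measure Ω)
    (R : ℕ → Ω → ℕ) (i : ℕ) (K : ℕ → ℕ → ENNReal) : Prop :=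
  ∀ (n : ℕ) (q : ℕ → ℕ),
    P {ω | ∀ m ≤ n, R m ω = q m} =
      (if q 0 = i then 1 else 0) * ∏ m ∈ Finset.range n, K (q m) (q (m + 1))

/-- First hitting time of the absorbing state `1`. -/
noncomputable def hitOne {Ω : Type*} (R : ℕ → Ω → ℕ) (ω : Ω) : ℕ :=
  sInf {n | R n ω = 1}

namespace HTB
open Finset

lemma stirling2_succ (n k : ℕ) :
    stirling2 (n+1) (k+1) = (k+1) * stirling2 n (k+1) + stirling2 n k := rfl

lemma stirling2_eq_zero : ∀ (q p : ℕ), q < p → stirling2 q p = 0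
  | 0, _+1, _ => rfl
  | q+1, p+1, h => by
      rw [stirling2_succ, stirling2_eq_zero q (p+1) (by omega),
        stirling2_eq_zero q p (by omega)]
      ring

lemma stirling2_self : ∀ q, stirling2 q q = 1
  | 0 => rfl
  | q+1 => by
      rw [stirling2_succ, stirling2_self q, stirling2_eq_zero q (q+1) (by omega)]
      ring

lemma shift_sum (f : ℕ → ℕ) (q : ℕ) (h : f 0 = 0) (h2 : f (q+1) = 0) :
    ∑ k ∈ range (q+1), f (k+1) = ∑ p ∈ range (q+1), f p := by
  have h3 := Finset.sum_range_succ' f (q+1)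
  rw [Finset.sum_range_succ] at h3
  rw [h, h2, add_zero, add_zero] at h3
  exact h3.symm

lemma rowSum (N : ℕ) : ∀ q, ∑ p ∈ range (q+1), stirling2 q p * N.descFactorial p = N ^ q
  | 0 => by simp [stirling2]
  | q+1 => by
      rw [Finset.sum_range_succ' _ (q+1)]
      have h0 : stirling2 (q+1) 0 * N.descFactorial 0 = 0 := by simp [stirling2]
      rw [h0, add_zero]
      have hterm : ∀ k, stirling2 (q+1) (k+1) * N.descFactorial (k+1)
          = (k+1) * (stirling2 q (k+1) * N.descFactorial (k+1))
            + stirling2 q k * ((N - k) * N.descFactorial k) := by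
        intro k
        rw [stirling2_succ, Nat.descFactorial_succ]
        ring
      rw [Finset.sum_congr rfl (fun k _ => hterm k), Finset.sum_add_distrib]
      have h1 : ∑ k ∈ range (q+1),
            (fun p => p * (stirling2 q p * N.descFactorial p)) (k+1)
          = ∑ p ∈ range (q+1), p * (stirling2 q p * N.descFactorial p) :=
        shift_sum (fun p => p * (stirling2 q p * N.descFactorial p)) q
          (by show (0:ℕ) * _ = 0; ring)
          (by show (q+1) * (stirling2 q (q+1) * _) = 0
              rw [stirling2_eq_zero q (q+1) (by omega)]; ring)
      simp only [] at h1
      rw [h1, ← Finset.sum_add_distrib]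
      have hcoll : ∀ p, p * (stirling2 q p * N.descFactorial p)
          + stirling2 q p * ((N - p) * N.descFactorial p)
          = N * (stirling2 q p * N.descFactorial p) := by
        intro p
        rcases le_or_gt p N with h | h
        · zify [h]; ring
        · have hz : N.descFactorial p = 0 := (Nat.descFactorial_eq_zero_iff_lt).2 h
          simp [hz]
      rw [Finset.sum_congr rfl (fun p _ => hcoll p), ← Finset.mul_sum, rowSum N q]
      ring

lemma meanSum (N : ℕ) (hN : 1 ≤ N) : ∀ q,
    (∑ p ∈ range (q+1), p * (stirling2 q p * N.descFactorial p)) + N * (N-1) ^ q = N ^ (q+1)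
  | 0 => by simp [stirling2]
  | q+1 => by
      have key : ∑ p ∈ range (q+2), p * (stirling2 (q+1) p * N.descFactorial p)
          = (N-1) * (∑ p ∈ range (q+1), p * (stirling2 q p * N.descFactorial p)) + N * N ^ q := by
        rw [Finset.sum_range_succ' _ (q+1)]
        have h0 : (0:ℕ) * (stirling2 (q+1) 0 * N.descFactorial 0) = 0 := by simp
        rw [h0, add_zero]
        have hterm : ∀ k, (k+1) * (stirling2 (q+1) (k+1) * N.descFactorial (k+1))
            = (k+1)*(k+1) * (stirling2 q (k+1) * N.descFactorial (k+1))
              + stirling2 q k * N.descFactorial k * ((k+1) * (N - k)) := by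
          intro k
          rw [stirling2_succ, Nat.descFactorial_succ]
          ring
        rw [Finset.sum_congr rfl (fun k _ => hterm k), Finset.sum_add_distrib]
        have h1 : ∑ k ∈ range (q+1),
              (fun p => p * p * (stirling2 q p * N.descFactorial p)) (k+1)
            = ∑ p ∈ range (q+1), p * p * (stirling2 q p * N.descFactorial p) :=
          shift_sum (fun p => p * p * (stirling2 q p * N.descFactorial p)) q
            (by show (0:ℕ) * 0 * _ = 0; ring)
            (by show (q+1) * (q+1) * (stirling2 q (q+1) * _) = 0
                rw [stirling2_eq_zero q (q+1) (by omega)]; ring)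
        simp only [] at h1
        rw [h1, ← Finset.sum_add_distrib]
        have hcoll : ∀ p, p * p * (stirling2 q p * N.descFactorial p)
            + stirling2 q p * N.descFactorial p * ((p+1) * (N - p))
            = (N-1) * (p * (stirling2 q p * N.descFactorial p))
              + N * (stirling2 q p * N.descFactorial p) := by
          intro p
          rcases le_or_gt p N with h | h
          · zify [h, hN]; ring
          · have hz : N.descFactorial p = 0 := (Nat.descFactorial_eq_zero_iff_lt).2 h
            simp [hz]
        rw [Finset.sum_congr rfl (fun p _ => hcoll p), Finset.sum_add_distrib,
          ← Finset.mul_sum, ← Finset.mul_sum, rowSum N q]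
      have IH := meanSum N hN q
      rw [show q + 1 + 1 = q + 2 from rfl, key]
      zify [hN] at IH ⊢
      linear_combination ((N:ℤ) - 1) * IH

lemma weightMono (N q : ℕ) (w : ℕ → ℕ) (hw : ∀ p, w (p+1) ≤ w p) :
    ∑ p ∈ range (q+2), w p * (stirling2 (q+1) p * N.descFactorial p)
      ≤ N * ∑ p ∈ range (q+1), w p * (stirling2 q p * N.descFactorial p) := by
  rw [Finset.sum_range_succ' _ (q+1)]
  have h0 : w 0 * (stirling2 (q+1) 0 * N.descFactorial 0) = 0 := by simp [stirling2]
  rw [h0, add_zero]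
  have hterm : ∀ k, w (k+1) * (stirling2 (q+1) (k+1) * N.descFactorial (k+1))
      = w (k+1) * ((k+1) * (stirling2 q (k+1) * N.descFactorial (k+1)))
        + w (k+1) * (stirling2 q k * ((N - k) * N.descFactorial k)) := by
    intro k
    rw [stirling2_succ, Nat.descFactorial_succ]
    ring
  rw [Finset.sum_congr rfl (fun k _ => hterm k), Finset.sum_add_distrib]
  have step1 : ∑ k ∈ range (q+1), w (k+1) * ((k+1) * (stirling2 q (k+1) * N.descFactorial (k+1)))
      = ∑ p ∈ range (q+1), w p * (p * (stirling2 q p * N.descFactorial p)) := by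
    have := shift_sum (fun p => w p * (p * (stirling2 q p * N.descFactorial p))) q
      (by show w 0 * ((0:ℕ) * _) = 0; ring)
      (by show w (q+1) * ((q+1) * (stirling2 q (q+1) * _)) = 0
          rw [stirling2_eq_zero q (q+1) (by omega)]; ring)
    simpa using this
  have step2 : ∑ k ∈ range (q+1), w (k+1) * (stirling2 q k * ((N - k) * N.descFactorial k))
      ≤ ∑ k ∈ range (q+1), w k * (stirling2 q k * ((N - k) * N.descFactorial k)) :=
    Finset.sum_le_sum (fun k _ => Nat.mul_le_mul_right _ (hw k))
  calc ∑ k ∈ range (q+1), w (k+1) * ((k+1) * (stirling2 q (k+1) * N.descFactorial (k+1)))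
        + ∑ k ∈ range (q+1), w (k+1) * (stirling2 q k * ((N - k) * N.descFactorial k))
      ≤ ∑ p ∈ range (q+1), w p * (p * (stirling2 q p * N.descFactorial p))
        + ∑ k ∈ range (q+1), w k * (stirling2 q k * ((N - k) * N.descFactorial k)) := by
        rw [step1]; exact Nat.add_le_add_left step2 _
    _ ≤ N * ∑ p ∈ range (q+1), w p * (stirling2 q p * N.descFactorial p) := by
        rw [← Finset.sum_add_distrib, Finset.mul_sum]
        apply Finset.sum_le_sum
        intro p _
        rcases le_or_gt p N with h | h
        · apply le_of_eq; zify [h]; ring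
        · have hz : N.descFactorial p = 0 := (Nat.descFactorial_eq_zero_iff_lt).2 h
          simp [hz]

lemma weightIter (N j : ℕ) (w : ℕ → ℕ) (hw : ∀ p, w (p+1) ≤ w p) : ∀ d,
    ∑ p ∈ range (j+d+1), w p * (stirling2 (j+d) p * N.descFactorial p)
      ≤ N ^ d * ∑ p ∈ range (j+1), w p * (stirling2 j p * N.descFactorial p)
  | 0 => by simp
  | d+1 => by
      have h1 := weightMono N (j+d) w hw
      have h2 := weightIter N j w hw d
      calc ∑ p ∈ range (j+(d+1)+1), w p * (stirling2 (j+(d+1)) p * N.descFactorial p)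
          = ∑ p ∈ range ((j+d)+2), w p * (stirling2 ((j+d)+1) p * N.descFactorial p) := by
            norm_num [show j+(d+1) = (j+d)+1 from by omega]
        _ ≤ N * ∑ p ∈ range (j+d+1), w p * (stirling2 (j+d) p * N.descFactorial p) := h1
        _ ≤ N * (N ^ d * ∑ p ∈ range (j+1), w p * (stirling2 j p * N.descFactorial p)) :=
            Nat.mul_le_mul_left _ h2
        _ = N ^ (d+1) * ∑ p ∈ range (j+1), w p * (stirling2 j p * N.descFactorial p) := by ring

lemma pow_succ_ineq (q : ℕ) : ∀ k, q^(k+1) + (k+1) * q^k ≤ (q+1)^(k+1)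
  | 0 => by simp
  | k+1 => by
      have IH := pow_succ_ineq q k
      have e : (q+1) * (q^(k+1) + (k+1) * q^k)
          = q^(k+2) + (k+2) * q^(k+1) + (k+1) * q^k := by ring
      calc q^(k+2) + (k+2) * q^(k+1)
          ≤ q^(k+2) + (k+2) * q^(k+1) + (k+1) * q^k := Nat.le_add_right _ _
        _ = (q+1) * (q^(k+1) + (k+1) * q^k) := e.symm
        _ ≤ (q+1) * (q+1)^(k+1) := Nat.mul_le_mul_left _ IH
        _ = (q+1)^(k+2) := by ring

lemma stirlingBound : ∀ q m, m ≤ q → 2^m * m.factorial * stirling2 q (q - m) ≤ q^(2*m)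
  | q, 0, _ => by simp [stirling2_self]
  | 0, m+1, h => by omega
  | q+1, m+1, h => by
      have hm : m ≤ q := by omega
      rcases Nat.eq_or_lt_of_le hm with heq | hmq
      · have hz : q+1-(m+1) = 0 := by omega
        rw [hz]
        have : stirling2 (q+1) 0 = 0 := rfl
        rw [this]
        simp
      · have e1 : q+1-(m+1) = (q-(m+1))+1 := by omega
        have e2 : q - (m+1) + 1 = q - m := by omega
        rw [e1, stirling2_succ, e2]
        have IH1 := stirlingBound q m hm
        have IH2 := stirlingBound q (m+1) (by omega)
        have expand : 2^(m+1) * (m+1).factorial * ((q - m) * stirling2 q (q - m)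
              + stirling2 q (q - (m+1)))
            = 2 * (m+1) * (q-m) * (2^m * m.factorial * stirling2 q (q-m))
              + 2^(m+1) * (m+1).factorial * stirling2 q (q - (m+1)) := by
          rw [Nat.factorial_succ]
          ring
        rw [expand]
        have b1 : 2 * (m+1) * (q-m) * (2^m * m.factorial * stirling2 q (q-m))
            ≤ 2 * (m+1) * (q-m) * q^(2*m) := Nat.mul_le_mul_left _ IH1
        have b2 : 2^(m+1) * (m+1).factorial * stirling2 q (q - (m+1)) ≤ q^(2*m+2) := by
          have e3 : 2*(m+1) = 2*m+2 := by ring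
          rw [← e3]; exact IH2
        have b3 : 2 * (m+1) * (q-m) * q^(2*m) ≤ (2*m+2) * q^(2*m+1) := by
          have h5 : (q - m) * q^(2*m) ≤ q^(2*m+1) := by
            rw [pow_succ, mul_comm (q^(2*m)) q]
            exact Nat.mul_le_mul_right _ (by omega)
          calc 2 * (m+1) * (q-m) * q^(2*m) = (2*m+2) * ((q-m) * q^(2*m)) := by ring
            _ ≤ (2*m+2) * q^(2*m+1) := Nat.mul_le_mul_left _ h5
        have b4 : q^(2*m+2) + (2*m+2) * q^(2*m+1) ≤ (q+1)^(2*m+2) := by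
          have h6 := pow_succ_ineq q (2*m+1)
          have e4 : 2*m+1+1 = 2*m+2 := by omega
          rw [e4] at h6
          exact h6
        have e5 : (q+1)^(2*(m+1)) = (q+1)^(2*m+2) := by
          have : 2*(m+1) = 2*m+2 := by ring
          rw [this]
        rw [e5]
        calc 2 * (m+1) * (q-m) * (2^m * m.factorial * stirling2 q (q-m))
              + 2^(m+1) * (m+1).factorial * stirling2 q (q - (m+1))
            ≤ (2*m+2) * q^(2*m+1) + q^(2*m+2) := add_le_add (le_trans b1 b3) b2
          _ ≤ (q+1)^(2*m+2) := by omega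

lemma two_mul_le_factorial : ∀ m, 2 * (m+1) ≤ (m+2).factorial
  | 0 => by decide
  | m+1 => by
      have IH := two_mul_le_factorial m
      have h1 : (m+3).factorial = (m+3) * (m+2).factorial := rfl
      nlinarith

end HTB

namespace HTB
open Finset

lemma choose2 (q : ℕ) : 2 * q.choose 2 = q * (q - 1) := by
  induction q with
  | zero => rfl
  | succ n IH =>
    rw [Nat.choose_succ_succ, Nat.choose_one_right]
    cases n with
    | zero => rfl
    | succ s =>
      have h : s + 1 + 1 - 1 = s + 1 := rfl
      have h2 : s + 1 - 1 = s := rfl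
      rw [h]
      rw [h2] at IH
      zify at IH ⊢
      linear_combination IH

lemma choose3 (q : ℕ) : 6 * q.choose 3 = q * (q - 1) * (q - 2) := by
  induction q with
  | zero => rfl
  | succ n IH =>
    rw [Nat.choose_succ_succ]
    have hc2 := choose2 n
    cases n with
    | zero => rfl
    | succ s =>
      cases s with
      | zero => rfl
      | succ t =>
        have h1 : t + 1 + 1 + 1 - 1 = t + 2 := rfl
        have h2 : t + 1 + 1 + 1 - 2 = t + 1 := rfl
        have h3 : t + 1 + 1 - 1 = t + 1 := rfl
        have h4 : t + 1 + 1 - 2 = t := rfl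
        rw [h1, h2]
        rw [h3, h4] at IH
        rw [h3] at hc2
        zify at IH hc2 ⊢
        linear_combination IH + 3 * hc2

lemma bonferroni (x : ℝ) (h0 : 0 ≤ x) (h1 : x ≤ 1) :
    ∀ q : ℕ, 1 - q*x + (q.choose 2)*x^2 - (q.choose 3)*x^3 ≤ (1-x)^q
  | 0 => by norm_num
  | q+1 => by
      have IH := bonferroni x h0 h1 q
      have hx : (0:ℝ) ≤ 1 - x := by linarith
      have step : (1-x) * (1 - q*x + (q.choose 2)*x^2 - (q.choose 3)*x^3) ≤ (1-x)^(q+1) := by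
        rw [pow_succ (1-x) q, mul_comm ((1-x)^q) (1-x)]
        exact mul_le_mul_of_nonneg_left IH hx
      refine le_trans ?_ step
      have e2 : (((q+1).choose 2 : ℕ) : ℝ) = (q.choose 2 : ℝ) + q := by
        rw [Nat.choose_succ_succ, Nat.choose_one_right]
        push_cast; ring
      have e3 : (((q+1).choose 3 : ℕ) : ℝ) = (q.choose 3 : ℝ) + q.choose 2 := by
        rw [Nat.choose_succ_succ]
        push_cast; ring
      have key : (1-x) * (1 - q*x + (q.choose 2)*x^2 - (q.choose 3)*x^3)
          = 1 - ((q:ℝ)+1)*x + ((q.choose 2 : ℝ) + q)*x^2 - ((q.choose 3 : ℝ) + q.choose 2)*x^3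
            + (q.choose 3)*x^4 := by ring
      rw [key, e2, e3]
      have hc3 : (0:ℝ) ≤ (q.choose 3) * x^4 :=
        mul_nonneg (Nat.cast_nonneg _) (by positivity)
      push_cast
      linarith

/-- mean bound : ∑ p ⬝ P(p) ≤ (q - q(q-1)/(4N)) N^q -/
lemma meanBound (N q : ℕ) (hq : 4 ≤ q) (hqN : q ≤ N) :
    ((∑ p ∈ range (q+1), p * (stirling2 q p * N.descFactorial p) : ℕ) : ℝ)
      ≤ ((q:ℝ) - q*((q:ℝ)-1)/(4*N)) * (N:ℝ)^q := by
  have hN1 : 1 ≤ N := by omega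
  have hNR : (0:ℝ) < N := by exact_mod_cast Nat.lt_of_lt_of_le (by norm_num) hN1
  have mean := meanSum N hN1 q
  have meanR : ((∑ p ∈ range (q+1), p * (stirling2 q p * N.descFactorial p) : ℕ) : ℝ)
      + N * ((N:ℝ)-1)^q = (N:ℝ)^(q+1) := by
    have := congrArg (fun n : ℕ => (n : ℝ)) mean
    push_cast [Nat.cast_sub hN1] at this
    convert this using 2 <;> push_cast <;> ring
  have bonf := bonferroni (1/(N:ℝ)) (by positivity) (by
    rw [div_le_one hNR]; exact_mod_cast hN1) q
  -- (N-1)/N = 1 - 1/N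
  have hsub : ((N:ℝ)-1)^q = (1 - 1/(N:ℝ))^q * (N:ℝ)^q := by
    rw [← mul_pow]
    congr 1
    field_simp
  have hq2 : (2:ℝ) * (q.choose 2) = q * ((q:ℝ)-1) := by
    have := choose2 q
    have h2 := congrArg (fun n : ℕ => (n : ℝ)) this
    push_cast [Nat.cast_sub (by omega : 1 ≤ q)] at h2
    linarith
  have hq3 : (6:ℝ) * (q.choose 3) = q * ((q:ℝ)-1) * ((q:ℝ)-2) := by
    have := choose3 q
    have h2 := congrArg (fun n : ℕ => (n : ℝ)) this
    push_cast [Nat.cast_sub (by omega : 1 ≤ q), Nat.cast_sub (by omega : 2 ≤ q)] at h2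
    linarith
  -- N (N-1)^q ≥ N^{q+1} (1 - q/N + C2/N² - C3/N³)
  have hpow : (0:ℝ) < (N:ℝ)^q := by positivity
  have main : (N:ℝ) * ((N:ℝ)-1)^q
      ≥ (N:ℝ)^(q+1) - q * (N:ℝ)^q + (q.choose 2) * (N:ℝ)^q / N - (q.choose 3) * (N:ℝ)^q / (N^2) := by
    have h5 : (N:ℝ) * ((N:ℝ)-1)^q = (1 - 1/(N:ℝ))^q * (N:ℝ)^(q+1) := by
      rw [hsub]; ring
    rw [h5]
    have h6 : (1 - (q:ℝ)*(1/N) + (q.choose 2)*(1/(N:ℝ))^2 - (q.choose 3)*(1/(N:ℝ))^3) * (N:ℝ)^(q+1)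
        = (N:ℝ)^(q+1) - q * (N:ℝ)^q + (q.choose 2) * (N:ℝ)^q / N - (q.choose 3) * (N:ℝ)^q / (N^2) := by
      field_simp
      ring
    rw [← h6]
    apply mul_le_mul_of_nonneg_right bonf (by positivity)
  -- combine
  have hNne : (N:ℝ) ≠ 0 := ne_of_gt hNR
  have hc3N : (q.choose 3 : ℝ) * (N:ℝ)^q / ((N:ℝ)^2) ≤ q * ((q:ℝ)-1)/(6*N) * (N:ℝ)^q := by
    have hqc3 : (q.choose 3 : ℝ) = q * ((q:ℝ)-1) * ((q:ℝ)-2) / 6 := by linarith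
    have hq2' : ((q:ℝ)-2) ≤ N := by
      have : (q:ℝ) ≤ N := by exact_mod_cast hqN
      linarith
    have h1 : (0:ℝ) ≤ q * ((q:ℝ)-1) := by
      have : (4:ℝ) ≤ q := by exact_mod_cast hq
      nlinarith
    have base : (0:ℝ) ≤ q*((q:ℝ)-1) * (N:ℝ)^q / 6 :=
      div_nonneg (mul_nonneg h1 (le_of_lt hpow)) (by norm_num)
    rw [hqc3, div_le_iff₀ (by positivity : (0:ℝ) < (N:ℝ)^2)]
    calc q * ((q:ℝ)-1) * ((q:ℝ)-2) / 6 * (N:ℝ)^q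
        = (q*((q:ℝ)-1) * (N:ℝ)^q / 6) * ((q:ℝ)-2) := by ring
      _ ≤ (q*((q:ℝ)-1) * (N:ℝ)^q / 6) * N := mul_le_mul_of_nonneg_left hq2' base
      _ = q * ((q:ℝ)-1)/(6*N) * (N:ℝ)^q * (N:ℝ)^2 := by field_simp
  have hc2N : (q.choose 2 : ℝ) * (N:ℝ)^q / N = q*((q:ℝ)-1)/(2*N) * (N:ℝ)^q := by
    have hqc2 : (q.choose 2 : ℝ) = q * ((q:ℝ)-1) / 2 := by linarith
    rw [hqc2]
    field_simp
  have final : ((∑ p ∈ range (q+1), p * (stirling2 q p * N.descFactorial p) : ℕ) : ℝ)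
      ≤ q * (N:ℝ)^q - (q.choose 2) * (N:ℝ)^q / N + (q.choose 3) * (N:ℝ)^q / (N^2) := by
    have := meanR
    linarith [main]
  have hfrac : q*((q:ℝ)-1)/(2*N) * (N:ℝ)^q - q*((q:ℝ)-1)/(6*N) * (N:ℝ)^q
      ≥ q*((q:ℝ)-1)/(4*N) * (N:ℝ)^q := by
    have h1 : (0:ℝ) ≤ q * ((q:ℝ)-1) := by
      have : (4:ℝ) ≤ q := by exact_mod_cast hq
      nlinarith
    have h2 : q*((q:ℝ)-1)/(2*N) - q*((q:ℝ)-1)/(6*N) = q*((q:ℝ)-1)/(3*N) := by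
      field_simp
      ring
    have h3 : q*((q:ℝ)-1)/(3*N) ≥ q*((q:ℝ)-1)/(4*N) := by
      apply div_le_div_of_nonneg_left h1 (by positivity) (by linarith)
    calc q*((q:ℝ)-1)/(2*N) * (N:ℝ)^q - q*((q:ℝ)-1)/(6*N) * (N:ℝ)^q
        = (q*((q:ℝ)-1)/(2*N) - q*((q:ℝ)-1)/(6*N)) * (N:ℝ)^q := by ring
      _ = q*((q:ℝ)-1)/(3*N) * (N:ℝ)^q := by rw [h2]
      _ ≥ q*((q:ℝ)-1)/(4*N) * (N:ℝ)^q := mul_le_mul_of_nonneg_right h3 (le_of_lt hpow)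
  calc ((∑ p ∈ range (q+1), p * (stirling2 q p * N.descFactorial p) : ℕ) : ℝ)
      ≤ q * (N:ℝ)^q - (q.choose 2) * (N:ℝ)^q / N + (q.choose 3) * (N:ℝ)^q / (N^2) := final
    _ ≤ q * (N:ℝ)^q - q*((q:ℝ)-1)/(2*N) * (N:ℝ)^q + q*((q:ℝ)-1)/(6*N) * (N:ℝ)^q := by
        rw [hc2N]; linarith [hc3N]
    _ ≤ q * (N:ℝ)^q - q*((q:ℝ)-1)/(4*N) * (N:ℝ)^q := by linarith [hfrac]
    _ = ((q:ℝ) - q*((q:ℝ)-1)/(4*N)) * (N:ℝ)^q := by ring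

end HTB

namespace HTB
open Finset

set_option maxHeartbeats 1000000 in
lemma overshootSmall (N j : ℕ) (hj : 4 ≤ j) (hN : j^5 ≤ N^2) :
    8 * (N:ℝ) * ∑ p ∈ range (j+1),
        ((j-1-p : ℕ):ℝ) * ((stirling2 j p * N.descFactorial p : ℕ):ℝ)
      ≤ (j:ℝ) * ((j:ℝ)-1) * (N:ℝ)^j := by
  have h2j : 2*j^2 ≤ N := by
    have h1 : (2*j^2)^2 ≤ N^2 := by
      calc (2*j^2)^2 = 4*j^4 := by ring
        _ ≤ j*j^4 := Nat.mul_le_mul_right _ hj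
        _ = j^5 := by ring
        _ ≤ N^2 := hN
    exact (Nat.pow_le_pow_iff_left (by norm_num)).1 h1
  have hjR : (4:ℝ) ≤ j := by exact_mod_cast hj
  have h32 : 32 ≤ N := by nlinarith [h2j, hj]
  have hNR : (32:ℝ) ≤ N := by exact_mod_cast h32
  have hN0 : (0:ℝ) < N := by linarith
  set b : ℝ := (j:ℝ)^2/(2*N) with hbdef
  have hb0 : 0 ≤ b := by positivity
  have hb : b ≤ 1/4 := by
    rw [hbdef, div_le_div_iff₀ (by linarith) (by norm_num)]
    have : (2*j^2 : ℝ) ≤ N := by exact_mod_cast h2j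
    push_cast at this ⊢
    linarith
  have hterm : ∀ p ∈ range (j+1),
      ((j-1-p : ℕ):ℝ) * ((stirling2 j p * N.descFactorial p : ℕ):ℝ)
        ≤ (if p + 2 ≤ j then ((j:ℝ)^4/(8*(N:ℝ)^2)) * (1/4:ℝ)^(j-2-p) * (N:ℝ)^j else 0) := by
    intro p _
    by_cases hc : p + 2 ≤ j
    · rw [if_pos hc]
      have hm2 : 2 ≤ j - p := by omega
      have hw : 2*(j-1-p) ≤ (j-p).factorial := by
        have h := two_mul_le_factorial (j-p-2)
        have e1 : j-p-2 + 1 = j - 1 - p := by omega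
        have e2 : j-p-2 + 2 = j-p := by omega
        rw [e1, e2] at h
        exact h
      have hs : 2^(j-p) * (j-p).factorial * stirling2 j p ≤ j^(2*(j-p)) := by
        have h := stirlingBound j (j-p) (by omega)
        rw [show j - (j-p) = p from by omega] at h
        exact h
      have hd : N.descFactorial p ≤ N^p := Nat.descFactorial_le_pow N p
      have hNat : 2^(j-p+1) * ((j-1-p) * (stirling2 j p * N.descFactorial p))
          ≤ j^(2*(j-p)) * N^p := by
        calc 2^(j-p+1) * ((j-1-p) * (stirling2 j p * N.descFactorial p))
            = (2*(j-1-p)) * (2^(j-p) * stirling2 j p) * N.descFactorial p := by ring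
          _ ≤ (j-p).factorial * (2^(j-p) * stirling2 j p) * N.descFactorial p :=
              Nat.mul_le_mul_right _ (Nat.mul_le_mul_right _ hw)
          _ = (2^(j-p) * (j-p).factorial * stirling2 j p) * N.descFactorial p := by ring
          _ ≤ j^(2*(j-p)) * N^p := Nat.mul_le_mul hs hd
      have hcast : ((j-1-p:ℕ):ℝ) * ((stirling2 j p * N.descFactorial p : ℕ):ℝ)
          ≤ (j:ℝ)^(2*(j-p)) * (N:ℝ)^p / 2^(j-p+1) := by
        rw [le_div_iff₀ (by positivity)]
        have h := (Nat.cast_le (α := ℝ)).2 hNat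
        push_cast at h ⊢
        nlinarith [h]
      have halg : (j:ℝ)^(2*(j-p)) * (N:ℝ)^p / 2^(j-p+1) = (1/2) * b^(j-p) * (N:ℝ)^j := by
      -- N^j = N^(j-p) * N^p
        have hNj : (N:ℝ)^j = (N:ℝ)^(j-p) * (N:ℝ)^p := by
          rw [← pow_add]
          congr 1
          omega
        rw [hbdef, div_pow, hNj]
        have hj2m : ((j:ℝ)^2)^(j-p) = (j:ℝ)^(2*(j-p)) := by
          rw [← pow_mul]
        rw [hj2m]
        have h2N : (2*(N:ℝ))^(j-p) = 2^(j-p) * (N:ℝ)^(j-p) := by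
          rw [mul_pow]
        rw [h2N]
        have hpow2 : (2:ℝ)^(j-p+1) = 2 * 2^(j-p) := by
          rw [pow_succ]; ring
        rw [hpow2]
        field_simp
      have hpowb : (1/2) * b^(j-p) ≤ ((j:ℝ)^4/(8*(N:ℝ)^2)) * (1/4:ℝ)^(j-2-p) := by
        have hsplit : b^(j-p) = b^2 * b^(j-p-2) := by
          rw [← pow_add]
          congr 1
          omega
        have hmono : b^(j-p-2) ≤ (1/4:ℝ)^(j-p-2) := pow_le_pow_left₀ hb0 hb _
        have he : j-p-2 = j-2-p := by omega
        have hb2 : (1/2) * b^2 = (j:ℝ)^4/(8*(N:ℝ)^2) := by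
          rw [hbdef]
          field_simp
          ring
        calc (1/2) * b^(j-p)
            = ((1/2) * b^2) * b^(j-p-2) := by rw [hsplit]; ring
          _ ≤ ((1/2) * b^2) * (1/4:ℝ)^(j-p-2) := by
              apply mul_le_mul_of_nonneg_left hmono
              positivity
          _ = ((j:ℝ)^4/(8*(N:ℝ)^2)) * (1/4:ℝ)^(j-2-p) := by rw [hb2, he]
      calc ((j-1-p:ℕ):ℝ) * ((stirling2 j p * N.descFactorial p : ℕ):ℝ)
          ≤ (j:ℝ)^(2*(j-p)) * (N:ℝ)^p / 2^(j-p+1) := hcast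
        _ = (1/2) * b^(j-p) * (N:ℝ)^j := halg
        _ ≤ ((j:ℝ)^4/(8*(N:ℝ)^2)) * (1/4:ℝ)^(j-2-p) * (N:ℝ)^j := by
            apply mul_le_mul_of_nonneg_right hpowb (by positivity)
    · rw [if_neg hc]
      have hz : j - 1 - p = 0 := by omega
      rw [hz]
      simp
  have hsum := Finset.sum_le_sum hterm
  have hite : ∑ p ∈ range (j+1),
      (if p + 2 ≤ j then ((j:ℝ)^4/(8*(N:ℝ)^2)) * (1/4:ℝ)^(j-2-p) * (N:ℝ)^j else 0)
      = ∑ p ∈ range (j-1), ((j:ℝ)^4/(8*(N:ℝ)^2)) * (1/4:ℝ)^(j-2-p) * (N:ℝ)^j := by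
    rw [← Finset.sum_filter]
    have hfil : (range (j+1)).filter (fun p => p + 2 ≤ j) = range (j-1) := by
      ext p
      simp only [Finset.mem_filter, Finset.mem_range]
      omega
    rw [hfil]
  have hgeo : ∑ p ∈ range (j-1), (1/4:ℝ)^(j-2-p) ≤ 4/3 := by
    have hrefl := Finset.sum_range_reflect (fun k => (1/4:ℝ)^k) (j-1)
    have he : ∀ p ∈ range (j-1), (1/4:ℝ)^(j-1-1-p) = (1/4:ℝ)^(j-2-p) := by
      intro p _
      have : j-1-1-p = j-2-p := by omega
      rw [this]
    rw [Finset.sum_congr rfl he] at hrefl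
    rw [hrefl, geom_sum_eq (by norm_num : (1/4:ℝ) ≠ 1)]
    have h1 : (0:ℝ) ≤ (1/4:ℝ)^(j-1) := by positivity
    have h2 : ((1/4:ℝ)^(j-1) - 1) / (1/4 - 1) = (1 - (1/4:ℝ)^(j-1)) * (4/3) := by
      field_simp
      ring
    rw [h2]
    nlinarith [h1]
  -- key cubic inequality
  have hNj5 : (j:ℝ)^5 ≤ (N:ℝ)^2 := by exact_mod_cast hN
  have h9 : 16*(j:ℝ) ≤ 9*((j:ℝ)-1)^2 := by nlinarith [hjR]
  have hsq : (4*(j:ℝ)^3)^2 ≤ (3*((j:ℝ)-1)*N)^2 := by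
    have t1 : (0:ℝ) ≤ (9*((j:ℝ)-1)^2 - 16*j) * (N:ℝ)^2 :=
      mul_nonneg (by linarith) (by positivity)
    have t2 : (0:ℝ) ≤ 16*(j:ℝ) * ((N:ℝ)^2 - (j:ℝ)^5) :=
      mul_nonneg (by linarith) (by linarith)
    nlinarith [t1, t2]
  have hkey : 4*(j:ℝ)^3 ≤ 3*((j:ℝ)-1)*N := by
    have ha : (0:ℝ) ≤ 4*(j:ℝ)^3 := by positivity
    have hbb : (0:ℝ) ≤ 3*((j:ℝ)-1)*N := by
      apply mul_nonneg (by linarith) (le_of_lt hN0)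
    exact (pow_le_pow_iff_left₀ ha hbb (by norm_num)).1 hsq
  -- assemble
  have hconst : (0:ℝ) ≤ (j:ℝ)^4/(8*(N:ℝ)^2) * (N:ℝ)^j := by positivity
  have h8 : (0:ℝ) ≤ 8*(N:ℝ) := by positivity
  have step1 : 8 * (N:ℝ) * ∑ p ∈ range (j+1),
        ((j-1-p : ℕ):ℝ) * ((stirling2 j p * N.descFactorial p : ℕ):ℝ)
      ≤ 8 * (N:ℝ) * ∑ p ∈ range (j-1), ((j:ℝ)^4/(8*(N:ℝ)^2)) * (1/4:ℝ)^(j-2-p) * (N:ℝ)^j :=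
    mul_le_mul_of_nonneg_left (le_of_le_of_eq hsum hite) h8
  have step2 : ∑ p ∈ range (j-1), ((j:ℝ)^4/(8*(N:ℝ)^2)) * (1/4:ℝ)^(j-2-p) * (N:ℝ)^j
      = ((j:ℝ)^4/(8*(N:ℝ)^2)) * (N:ℝ)^j * ∑ p ∈ range (j-1), (1/4:ℝ)^(j-2-p) := by
    rw [Finset.mul_sum]
    exact Finset.sum_congr rfl (fun p _ => by ring)
  have step3 : ((j:ℝ)^4/(8*(N:ℝ)^2)) * (N:ℝ)^j * (∑ p ∈ range (j-1), (1/4:ℝ)^(j-2-p))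
      ≤ ((j:ℝ)^4/(8*(N:ℝ)^2)) * (N:ℝ)^j * (4/3) := mul_le_mul_of_nonneg_left hgeo hconst
  have step4 : 8 * (N:ℝ) * (((j:ℝ)^4/(8*(N:ℝ)^2)) * (N:ℝ)^j * (4/3))
      ≤ (j:ℝ) * ((j:ℝ)-1) * (N:ℝ)^j := by
    have e : 8*(N:ℝ)*((j:ℝ)^4/(8*(N:ℝ)^2)) = (j:ℝ)^4/N := by
      field_simp
    have lhs_eq : 8 * (N:ℝ) * (((j:ℝ)^4/(8*(N:ℝ)^2)) * (N:ℝ)^j * (4/3))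
        = (8*(N:ℝ)*((j:ℝ)^4/(8*(N:ℝ)^2))) * ((N:ℝ)^j * (4/3)) := by ring
    rw [lhs_eq, e]
    have hj0 : (0:ℝ) ≤ (j:ℝ) := Nat.cast_nonneg j
    have hm : (j:ℝ) * (4*(j:ℝ)^3) ≤ (j:ℝ) * (3*((j:ℝ)-1)*N) :=
      mul_le_mul_of_nonneg_left hkey hj0
    have final : (j:ℝ)^4/N * (4/3) ≤ (j:ℝ)*((j:ℝ)-1) := by
      rw [div_mul_eq_mul_div, div_le_iff₀ hN0]
      nlinarith [hm]
    calc (j:ℝ)^4/N * ((N:ℝ)^j * (4/3)) = ((j:ℝ)^4/N * (4/3)) * (N:ℝ)^j := by ring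
      _ ≤ ((j:ℝ)*((j:ℝ)-1)) * (N:ℝ)^j := mul_le_mul_of_nonneg_right final (by positivity)
      _ = (j:ℝ) * ((j:ℝ)-1) * (N:ℝ)^j := by ring
  calc 8 * (N:ℝ) * ∑ p ∈ range (j+1),
        ((j-1-p : ℕ):ℝ) * ((stirling2 j p * N.descFactorial p : ℕ):ℝ)
      ≤ 8 * (N:ℝ) * ∑ p ∈ range (j-1), ((j:ℝ)^4/(8*(N:ℝ)^2)) * (1/4:ℝ)^(j-2-p) * (N:ℝ)^j := step1
    _ = 8 * (N:ℝ) * (((j:ℝ)^4/(8*(N:ℝ)^2)) * (N:ℝ)^j * ∑ p ∈ range (j-1), (1/4:ℝ)^(j-2-p)) := by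
        rw [step2]
    _ ≤ 8 * (N:ℝ) * (((j:ℝ)^4/(8*(N:ℝ)^2)) * (N:ℝ)^j * (4/3)) :=
        mul_le_mul_of_nonneg_left step3 h8
    _ ≤ (j:ℝ) * ((j:ℝ)-1) * (N:ℝ)^j := step4

end HTB

namespace HTB
open Finset

noncomputable def upot (N j p : ℕ) : ℝ :=
  11 * N * (1/((j-1:ℕ):ℝ) - 1/((max p (j-1) : ℕ):ℝ))

lemma upot_nonneg (N j p : ℕ) (hj : 2 ≤ j) : 0 ≤ upot N j p := by
  unfold upot
  have h1 : (0:ℝ) < ((j-1:ℕ):ℝ) := by exact_mod_cast (show 0 < j - 1 by omega)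
  have h2 : ((j-1:ℕ):ℝ) ≤ ((max p (j-1):ℕ):ℝ) := by exact_mod_cast le_max_right p (j-1)
  have h4 := one_div_le_one_div_of_le h1 h2
  have hN : (0:ℝ) ≤ 11 * N := by positivity
  apply mul_nonneg hN
  linarith

set_option maxHeartbeats 1000000 in
lemma starR (N j q : ℕ) (hj : 4 ≤ j) (hjq : j ≤ q) (hqN : q ≤ N) (hN5 : j^5 ≤ N^2) :
    (∑ p ∈ range (q+1), ((stirling2 q p * N.descFactorial p : ℕ):ℝ) * upot N j p) + (N:ℝ)^q
      ≤ upot N j q * (N:ℝ)^q := by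
  have hq4 : 4 ≤ q := le_trans hj hjq
  have hN1 : 1 ≤ N := le_trans hq4 hqN |>.trans (le_refl N) |>.trans (le_refl N) |> fun h => by omega
  have hn0 : (0:ℝ) < N := by exact_mod_cast (show 0 < N by omega)
  have hqq0 : (0:ℝ) < q := by exact_mod_cast (show 0 < q by omega)
  have hqqR : (4:ℝ) ≤ q := by exact_mod_cast hq4
  have hjR : (4:ℝ) ≤ j := by exact_mod_cast hj
  have hqNR : (q:ℝ) ≤ N := by exact_mod_cast hqN
  have hjqR : (j:ℝ) ≤ q := by exact_mod_cast hjq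
  set SD : ℕ → ℝ := fun p => ((stirling2 q p * N.descFactorial p : ℕ):ℝ) with hSD
  have hSD0 : ∀ p, 0 ≤ SD p := fun p => Nat.cast_nonneg _
  set X : ℝ := (N:ℝ)^q with hX
  have hX0 : (0:ℝ) < X := by positivity
  have hrow : ∑ p ∈ range (q+1), SD p = X := by
    rw [hSD, hX]
    have h := congrArg (Nat.cast : ℕ → ℝ) (rowSum N q)
    push_cast at h ⊢
    exact h
  set cc : ℝ := ((j-1:ℕ):ℝ) with hcc
  have hcc0 : (0:ℝ) < cc := by rw [hcc]; exact_mod_cast (show 0 < j - 1 by omega)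
  set mpR : ℕ → ℝ := fun p => ((max p (j-1) : ℕ):ℝ) with hmpR
  have hmp0 : ∀ p, 0 < mpR p := by
    intro p
    show (0:ℝ) < ((max p (j-1) : ℕ):ℝ)
    exact_mod_cast (show 0 < max p (j-1) by omega)
  have hmpq : ∀ p ∈ range (q+1), mpR p ≤ (q:ℝ) := by
    intro p hp
    rw [Finset.mem_range] at hp
    show ((max p (j-1) : ℕ):ℝ) ≤ (q:ℝ)
    exact_mod_cast (show max p (j-1) ≤ q by omega)
  -- B lower bound ingredients
  set M : ℝ := ∑ p ∈ range (q+1), SD p * mpR p with hM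
  set B : ℝ := ∑ p ∈ range (q+1), SD p * (1/(mpR p)) with hB
  -- mean bound
  have hmean : ∑ p ∈ range (q+1), SD p * (p:ℝ) ≤ ((q:ℝ) - q*((q:ℝ)-1)/(4*N)) * X := by
    have h := meanBound N q hq4 hqN
    have e : ((∑ p ∈ range (q+1), p * (stirling2 q p * N.descFactorial p) : ℕ) : ℝ)
        = ∑ p ∈ range (q+1), SD p * (p:ℝ) := by
      rw [hSD]
      push_cast
      exact Finset.sum_congr rfl (fun p _ => by ring)
    rw [← e]
    exact h
  -- overshoot bound
  have hover : ∑ p ∈ range (q+1), SD p * ((j-1-p : ℕ):ℝ) ≤ (j:ℝ)*((j:ℝ)-1)/(8*N) * X := by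
    have hGnat : ∑ p ∈ range (q+1), (j-1-p) * (stirling2 q p * N.descFactorial p)
        ≤ N^(q-j) * ∑ p ∈ range (j+1), (j-1-p) * (stirling2 j p * N.descFactorial p) := by
      have h := weightIter N j (fun p => j-1-p) (fun p => by omega) (q-j)
      rw [show j + (q-j) = q from by omega] at h
      exact h
    have hGR : ∑ p ∈ range (q+1), SD p * ((j-1-p:ℕ):ℝ)
        ≤ (N:ℝ)^(q-j) * ∑ p ∈ range (j+1), ((j-1-p:ℕ):ℝ) * ((stirling2 j p * N.descFactorial p : ℕ):ℝ) := by
      have hc := (Nat.cast_le (α := ℝ)).2 hGnat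
      push_cast at hc
      calc ∑ p ∈ range (q+1), SD p * ((j-1-p:ℕ):ℝ)
          = ∑ p ∈ range (q+1), ((j-1-p:ℕ):ℝ) * (((stirling2 q p : ℕ):ℝ) * ((N.descFactorial p : ℕ):ℝ)) := by
            rw [hSD]
            push_cast
            exact Finset.sum_congr rfl (fun p _ => by ring)
        _ ≤ (N:ℝ)^(q-j) * ∑ p ∈ range (j+1), ((j-1-p:ℕ):ℝ) * (((stirling2 j p : ℕ):ℝ) * ((N.descFactorial p : ℕ):ℝ)) := by
            convert hc using 2 <;> push_cast <;> ring_nf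
        _ = (N:ℝ)^(q-j) * ∑ p ∈ range (j+1), ((j-1-p:ℕ):ℝ) * ((stirling2 j p * N.descFactorial p : ℕ):ℝ) := by
            congr 1
            push_cast
            exact Finset.sum_congr rfl (fun p _ => by ring)
    have hsmall := overshootSmall N j hj hN5
    -- 8N * Gq ≤ 8N * N^{q-j} * Gj ≤ N^{q-j} * j(j-1)N^j = j(j-1) N^q
    have h8 : (0:ℝ) ≤ (N:ℝ)^(q-j) := by positivity
    have hcomb : 8*(N:ℝ) * ∑ p ∈ range (q+1), SD p * ((j-1-p:ℕ):ℝ)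
        ≤ (j:ℝ)*((j:ℝ)-1) * X := by
      calc 8*(N:ℝ) * ∑ p ∈ range (q+1), SD p * ((j-1-p:ℕ):ℝ)
          ≤ 8*(N:ℝ) * ((N:ℝ)^(q-j) * ∑ p ∈ range (j+1), ((j-1-p:ℕ):ℝ) * ((stirling2 j p * N.descFactorial p : ℕ):ℝ)) :=
            mul_le_mul_of_nonneg_left hGR (by positivity)
        _ = (N:ℝ)^(q-j) * (8*(N:ℝ) * ∑ p ∈ range (j+1), ((j-1-p:ℕ):ℝ) * ((stirling2 j p * N.descFactorial p : ℕ):ℝ)) := by ring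
        _ ≤ (N:ℝ)^(q-j) * ((j:ℝ)*((j:ℝ)-1) * (N:ℝ)^j) := mul_le_mul_of_nonneg_left hsmall h8
        _ = (j:ℝ)*((j:ℝ)-1) * ((N:ℝ)^(q-j) * (N:ℝ)^j) := by ring
        _ = (j:ℝ)*((j:ℝ)-1) * X := by
            rw [hX, ← pow_add]
            congr 2
            omega
    calc ∑ p ∈ range (q+1), SD p * ((j-1-p:ℕ):ℝ)
        = (8*(N:ℝ) * ∑ p ∈ range (q+1), SD p * ((j-1-p:ℕ):ℝ)) / (8*(N:ℝ)) := by
          field_simp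
      _ ≤ ((j:ℝ)*((j:ℝ)-1) * X) / (8*(N:ℝ)) :=
          div_le_div_of_nonneg_right hcomb (by positivity)
      _ = (j:ℝ)*((j:ℝ)-1)/(8*N) * X := by ring
  -- decomposition of M
  have hmax : ∀ p, (max p (j-1) : ℕ) = p + (j-1-p) := by intro p; omega
  have hMdec : M = (∑ p ∈ range (q+1), SD p * (p:ℝ))
      + ∑ p ∈ range (q+1), SD p * ((j-1-p:ℕ):ℝ) := by
    rw [hM, ← Finset.sum_add_distrib]
    apply Finset.sum_congr rfl
    intro p _
    have e : mpR p = (p:ℝ) + ((j-1-p:ℕ):ℝ) := by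
      show ((max p (j-1) : ℕ):ℝ) = _
      rw [hmax p]
      push_cast
      ring
    rw [e]
    ring
  have hMle : M ≤ ((q:ℝ) - q*((q:ℝ)-1)/(4*N)) * X + (j:ℝ)*((j:ℝ)-1)/(8*N) * X := by
    rw [hMdec]
    exact add_le_add hmean hover
  -- per-term lower bound on B
  have hBper : ∀ p ∈ range (q+1),
      SD p * (1/(q:ℝ) + ((q:ℝ) - mpR p)/(q:ℝ)^2) ≤ SD p * (1/(mpR p)) := by
    intro p hp
    apply mul_le_mul_of_nonneg_left _ (hSD0 p)
    have hm0 := hmp0 p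
    have hmq := hmpq p hp
    have e : 1/(mpR p) - (1/(q:ℝ) + ((q:ℝ) - mpR p)/(q:ℝ)^2)
        = ((q:ℝ) - mpR p)^2 / (mpR p * (q:ℝ)^2) := by
      field_simp
      ring
    have hpos : (0:ℝ) ≤ ((q:ℝ) - mpR p)^2 / (mpR p * (q:ℝ)^2) := by positivity
    linarith
  have hBlow : X*(1/(q:ℝ)) + (1/(q:ℝ)^2)*((q:ℝ)*X - M) ≤ B := by
    have hsplit : ∑ p ∈ range (q+1), SD p * (1/(q:ℝ) + ((q:ℝ) - mpR p)/(q:ℝ)^2)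
        = X*(1/(q:ℝ)) + (1/(q:ℝ)^2)*((q:ℝ)*X - M) := by
      have e : ∀ p ∈ range (q+1), SD p * (1/(q:ℝ) + ((q:ℝ) - mpR p)/(q:ℝ)^2)
          = SD p * (1/(q:ℝ)) + (1/(q:ℝ)^2) * ((q:ℝ) * SD p - SD p * mpR p) := by
        intro p _
        field_simp
      rw [Finset.sum_congr rfl e, Finset.sum_add_distrib, ← Finset.sum_mul, hrow,
        ← Finset.mul_sum]
      congr 1
      rw [Finset.sum_sub_distrib, ← Finset.mul_sum, hrow, hM]
    rw [hB, ← hsplit]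
    exact Finset.sum_le_sum hBper
  -- combine to B ≥ X/q + X(q-1)/(8Nq)
  have hqXM : (q:ℝ)*X - M ≥ (q:ℝ)*((q:ℝ)-1)/(8*N) * X := by
    have hjj : (j:ℝ)*((j:ℝ)-1) ≤ (q:ℝ)*((q:ℝ)-1) := by nlinarith
    have h1 : (j:ℝ)*((j:ℝ)-1)/(8*N) * X ≤ (q:ℝ)*((q:ℝ)-1)/(8*N) * X := by
      apply mul_le_mul_of_nonneg_right _ (le_of_lt hX0)
      apply div_le_div_of_nonneg_right hjj (by positivity)
    have h2 : (q:ℝ)*((q:ℝ)-1)/(4*N) * X - (q:ℝ)*((q:ℝ)-1)/(8*N) * X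
        = (q:ℝ)*((q:ℝ)-1)/(8*N) * X := by
      field_simp
      ring
    nlinarith [hMle, h1, h2]
  have hBlb : X*(1/(q:ℝ)) + X*((q:ℝ)-1)/(8*N*(q:ℝ)) ≤ B := by
    have e : (1/(q:ℝ)^2)*((q:ℝ)*((q:ℝ)-1)/(8*N) * X) = X*((q:ℝ)-1)/(8*N*(q:ℝ)) := by
      field_simp
    have h1 : (1/(q:ℝ)^2)*((q:ℝ)*X - M) ≥ (1/(q:ℝ)^2)*((q:ℝ)*((q:ℝ)-1)/(8*N) * X) := by
      apply mul_le_mul_of_nonneg_left hqXM (by positivity)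
    linarith [hBlow, h1, e.ge]
  -- final assembly
  have hexpand : ∑ p ∈ range (q+1), SD p * upot N j p = 11*(N:ℝ)*(X*(1/cc) - B) := by
    have e : ∀ p ∈ range (q+1), SD p * upot N j p
        = 11*(N:ℝ)*(SD p * (1/cc) - SD p * (1/(mpR p))) := by
      intro p _
      unfold upot
      show SD p * (11 * (N:ℝ) * (1/cc - 1/(mpR p))) = _
      ring
    rw [Finset.sum_congr rfl e, ← Finset.mul_sum, Finset.sum_sub_distrib,
      ← Finset.sum_mul, hrow, ← hB]
  have huq : upot N j q = 11*(N:ℝ)*(1/cc - 1/(q:ℝ)) := by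
    unfold upot
    have e : (max q (j-1) : ℕ) = q := by omega
    rw [e]
  have hfinal : X + 11*(N:ℝ)*X*(1/(q:ℝ)) ≤ 11*(N:ℝ)*B := by
    have h1 : 11*(N:ℝ)*(X*(1/(q:ℝ)) + X*((q:ℝ)-1)/(8*N*(q:ℝ))) ≤ 11*(N:ℝ)*B :=
      mul_le_mul_of_nonneg_left hBlb (by positivity)
    have h2 : 11*(N:ℝ)*(X*((q:ℝ)-1)/(8*N*(q:ℝ))) = (11/8)*X*((q:ℝ)-1)/(q:ℝ) := by
      field_simp
    have h3 : X ≤ (11/8)*X*((q:ℝ)-1)/(q:ℝ) := by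
      rw [le_div_iff₀ hqq0]
      nlinarith [hX0.le, hqqR]
    nlinarith [h1, h2, h3]
  rw [hexpand, huq]
  have main_eq : 11*(N:ℝ)*(1/cc - 1/(q:ℝ))*X
      - (11*(N:ℝ)*(X*(1/cc) - B) + X)
      = 11*(N:ℝ)*B - (X + 11*(N:ℝ)*X*(1/(q:ℝ))) := by ring
  linarith [hfinal, main_eq]

end HTB

namespace HTB
open Finset

lemma transMat_eq_zero (N q p : ℕ) (h : q < p) : transMat N q p = 0 := by
  unfold transMat
  rw [stirling2_eq_zero q p h]
  simp

noncomputable def uE (N j p : ℕ) : ENNReal := ENNReal.ofReal (upot N j p)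

lemma starE (N j q : ℕ) (hj : 4 ≤ j) (hjq : j ≤ q) (hqN : q ≤ N) (hN5 : j^5 ≤ N^2) :
    (∑' p, transMat N q p * uE N j p) + 1 ≤ uE N j q := by
  have hq4 : 4 ≤ q := le_trans hj hjq
  have hN1 : 1 ≤ N := by omega
  have hn0 : (0:ℝ) < N := by exact_mod_cast (show 0 < N by omega)
  have hpq : (0:ℝ) < (N:ℝ)^q := by positivity
  have hzero : ∀ p ∉ range (q+1), transMat N q p * uE N j p = 0 := by
    intro p hp
    rw [Finset.mem_range] at hp
    rw [transMat_eq_zero N q p (by omega)]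
    simp
  rw [tsum_eq_sum hzero]
  have htm : ∀ p, transMat N q p
      = ENNReal.ofReal (((stirling2 q p * N.descFactorial p : ℕ):ℝ) / (N:ℝ)^q) := by
    intro p
    unfold transMat
    rw [ENNReal.ofReal_div_of_pos hpq]
    congr 1
    · rw [ENNReal.ofReal_natCast]
    · rw [ENNReal.ofReal_pow (by positivity) q, ENNReal.ofReal_natCast]
  -- reduce to real inequality
  have hRieq : (∑ p ∈ range (q+1),
        (((stirling2 q p * N.descFactorial p : ℕ):ℝ) / (N:ℝ)^q) * upot N j p) + 1
      ≤ upot N j q := by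
    have hstar := starR N j q hj hjq hqN hN5
    have hdiv := div_le_div_of_nonneg_right hstar hpq.le
    have e1 : (upot N j q * (N:ℝ)^q) / (N:ℝ)^q = upot N j q := by
      field_simp
    have e2 : ((∑ p ∈ range (q+1), ((stirling2 q p * N.descFactorial p : ℕ):ℝ) * upot N j p)
          + (N:ℝ)^q) / (N:ℝ)^q
        = (∑ p ∈ range (q+1),
            (((stirling2 q p * N.descFactorial p : ℕ):ℝ) / (N:ℝ)^q) * upot N j p) + 1 := by
      rw [add_div, Finset.sum_div, div_self (ne_of_gt hpq)]
      congr 1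
      exact Finset.sum_congr rfl (fun p _ => by ring)
    rw [e1, e2] at hdiv
    exact hdiv
  -- cast to ENNReal
  have hterm : ∀ p ∈ range (q+1), transMat N q p * uE N j p
      = ENNReal.ofReal ((((stirling2 q p * N.descFactorial p : ℕ):ℝ) / (N:ℝ)^q) * upot N j p) := by
    intro p _
    rw [htm p]
    unfold uE
    rw [← ENNReal.ofReal_mul (by positivity)]
  rw [Finset.sum_congr rfl hterm, ← ENNReal.ofReal_sum_of_nonneg
    (fun p _ => mul_nonneg (by positivity) (upot_nonneg N j p (by omega)))]
  unfold uE
  rw [show (1:ENNReal) = ENNReal.ofReal 1 from (ENNReal.ofReal_one).symm,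
    ← ENNReal.ofReal_add (Finset.sum_nonneg
      (fun p _ => mul_nonneg (by positivity) (upot_nonneg N j p (by omega)))) (by norm_num)]
  exact ENNReal.ofReal_le_ofReal hRieq

end HTB

namespace HTB
open Finset

noncomputable def vchain (N j i : ℕ) : ℕ → ℕ → ENNReal
  | 0 => fun p => if p = i then 1 else 0
  | n+1 => fun p => if j ≤ p then ∑' q, vchain N j i n q * transMat N q p else 0

lemma vchain_zero (N j i p : ℕ) : vchain N j i 0 p = if p = i then 1 else 0 := rfl

lemma vchain_succ (N j i n p : ℕ) :
    vchain N j i (n+1) p = if j ≤ p then ∑' q, vchain N j i n q * transMat N q p else 0 := rfl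

lemma vchain_support (N j i : ℕ) (hji : j ≤ i) (hiN : i ≤ N) :
    ∀ n p, vchain N j i n p ≠ 0 → j ≤ p ∧ p ≤ N := by
  intro n
  induction n with
  | zero =>
    intro p h
    rw [vchain_zero] at h
    by_cases hp : p = i
    · subst hp; exact ⟨hji, hiN⟩
    · simp [hp] at h
  | succ n IH =>
    intro p h
    rw [vchain_succ] at h
    by_cases hp : j ≤ p
    · rw [if_pos hp] at h
      obtain ⟨q, hq⟩ : ∃ q, vchain N j i n q * transMat N q p ≠ 0 := by
        by_contra hall
        push_neg at hall
        exact h (ENNReal.tsum_eq_zero.2 hall)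
      have h1 : vchain N j i n q ≠ 0 := fun hz => hq (by rw [hz]; simp)
      have h2 : transMat N q p ≠ 0 := fun hz => hq (by rw [hz]; simp)
      have hqN := (IH q h1).2
      have hpq : p ≤ q := by
        by_contra hgt
        exact h2 (transMat_eq_zero N q p (by omega))
      exact ⟨hp, le_trans hpq hqN⟩
    · rw [if_neg hp] at h
      exact absurd rfl h

lemma vchain_tele (N j i : ℕ) (hj : 4 ≤ j) (hji : j ≤ i) (hiN : i ≤ N) (hN5 : j^5 ≤ N^2)
    (n : ℕ) :
    (∑' p, vchain N j i n p) + (∑' p, vchain N j i (n+1) p * uE N j p)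
      ≤ ∑' p, vchain N j i n p * uE N j p := by
  have h1 : (∑' p, vchain N j i (n+1) p * uE N j p)
      ≤ ∑' q, vchain N j i n q * ∑' p, transMat N q p * uE N j p := by
    have hle : ∀ p, vchain N j i (n+1) p * uE N j p
        ≤ ∑' q, (vchain N j i n q * (transMat N q p * uE N j p)) := by
      intro p
      rw [vchain_succ]
      split
      · apply le_of_eq
        rw [← ENNReal.tsum_mul_right]
        exact tsum_congr (fun q => by ring)
      · simp
    calc (∑' p, vchain N j i (n+1) p * uE N j p)
        ≤ ∑' p, ∑' q, (vchain N j i n q * (transMat N q p * uE N j p)) :=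
          ENNReal.tsum_le_tsum hle
      _ = ∑' q, ∑' p, (vchain N j i n q * (transMat N q p * uE N j p)) := ENNReal.tsum_comm
      _ = ∑' q, vchain N j i n q * ∑' p, (transMat N q p * uE N j p) :=
          tsum_congr (fun q => ENNReal.tsum_mul_left)
  calc (∑' p, vchain N j i n p) + (∑' p, vchain N j i (n+1) p * uE N j p)
      ≤ (∑' p, vchain N j i n p)
        + ∑' q, vchain N j i n q * ∑' p, transMat N q p * uE N j p := add_le_add_right h1 _
    _ = ∑' q, (vchain N j i n q * 1
        + vchain N j i n q * ∑' p, transMat N q p * uE N j p) := by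
        rw [ENNReal.tsum_add]
        simp
    _ ≤ ∑' q, vchain N j i n q * uE N j q := by
        apply ENNReal.tsum_le_tsum
        intro q
        rw [← mul_add]
        by_cases hz : vchain N j i n q = 0
        · rw [hz]; simp
        · obtain ⟨hjq, hqN⟩ := vchain_support N j i hji hiN n q hz
          apply mul_le_mul_right
          rw [add_comm]
          exact starE N j q hj hjq hqN hN5

lemma vchain_u0 (N j i : ℕ) : ∑' p, vchain N j i 0 p * uE N j p = uE N j i := by
  have h : ∀ p, vchain N j i 0 p * uE N j p = if p = i then uE N j i else 0 := by
    intro p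
    rw [vchain_zero]
    by_cases hp : p = i
    · subst hp; simp
    · simp [hp]
  rw [tsum_congr h, tsum_ite_eq]

lemma vchain_partial (N j i : ℕ) (hj : 4 ≤ j) (hji : j ≤ i) (hiN : i ≤ N) (hN5 : j^5 ≤ N^2) :
    ∀ T, (∑ n ∈ range T, ∑' p, vchain N j i n p)
      + (∑' p, vchain N j i T p * uE N j p) ≤ uE N j i
  | 0 => by
      rw [Finset.range_zero, Finset.sum_empty, zero_add, vchain_u0]
  | T+1 => by
      have IH := vchain_partial N j i hj hji hiN hN5 T
      have htele := vchain_tele N j i hj hji hiN hN5 T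
      calc (∑ n ∈ range (T+1), ∑' p, vchain N j i n p)
            + (∑' p, vchain N j i (T+1) p * uE N j p)
          = (∑ n ∈ range T, ∑' p, vchain N j i n p)
            + ((∑' p, vchain N j i T p) + (∑' p, vchain N j i (T+1) p * uE N j p)) := by
            rw [Finset.sum_range_succ]
            ring
        _ ≤ (∑ n ∈ range T, ∑' p, vchain N j i n p)
            + (∑' p, vchain N j i T p * uE N j p) := add_le_add_right htele _
        _ ≤ uE N j i := IH

lemma vchain_total (N j i : ℕ) (hj : 4 ≤ j) (hji : j ≤ i) (hiN : i ≤ N) (hN5 : j^5 ≤ N^2) :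
    (∑' n, ∑' p, vchain N j i n p) ≤ uE N j i := by
  apply Summable.tsum_le_of_sum_range_le ENNReal.summable
  intro T
  calc ∑ n ∈ range T, ∑' p, vchain N j i n p
      ≤ (∑ n ∈ range T, ∑' p, vchain N j i n p)
        + (∑' p, vchain N j i T p * uE N j p) := le_self_add
    _ ≤ uE N j i := vchain_partial N j i hj hji hiN hN5 T

end HTB

namespace HTB
open Finset

noncomputable def cylw (N : ℕ) (n : ℕ) (a : Fin (n+1) → ℕ) : ENNReal :=
  ∏ m : Fin n, transMat N (a m.castSucc) (a m.succ)

lemma cylw_snoc (N n : ℕ) (b : Fin (n+1) → ℕ) (x : ℕ) :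
    cylw N (n+1) (Fin.snoc b x) = cylw N n b * transMat N (b (Fin.last n)) x := by
  unfold cylw
  rw [Fin.prod_univ_castSucc]
  congr 1
  · apply Finset.prod_congr rfl
    intro m _
    rw [Fin.succ_castSucc, Fin.snoc_castSucc, Fin.snoc_castSucc]
  · rw [Fin.succ_last, Fin.snoc_last, Fin.snoc_castSucc]

def snocEquiv (n : ℕ) : ((Fin (n+1) → ℕ) × ℕ) ≃ (Fin (n+2) → ℕ) where
  toFun := fun bx => Fin.snoc bx.1 bx.2
  invFun := fun a => (Fin.init a, a (Fin.last (n+1)))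
  left_inv := fun bx => by simp [Fin.init_snoc, Fin.snoc_last]
  right_inv := fun a => by simp [Fin.snoc_init_self]

lemma tuple_sum (N j i : ℕ) (hji : j ≤ i) : ∀ n p,
    (∑' a : Fin (n+1) → ℕ, if (∀ m, j ≤ a m) ∧ a 0 = i ∧ a (Fin.last n) = p
        then cylw N n a else 0) ≤ vchain N j i n p := by
  intro n
  induction n with
  | zero =>
    intro p
    rw [← Equiv.tsum_eq (Equiv.funUnique (Fin 1) ℕ).symm]
    have hev : ∀ x : ℕ,
        (if (∀ m : Fin 1, j ≤ ((Equiv.funUnique (Fin 1) ℕ).symm x) m)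
            ∧ ((Equiv.funUnique (Fin 1) ℕ).symm x) 0 = i
            ∧ ((Equiv.funUnique (Fin 1) ℕ).symm x) (Fin.last 0) = p
          then cylw N 0 ((Equiv.funUnique (Fin 1) ℕ).symm x) else 0)
        ≤ (if x = i then (if p = i then (1:ENNReal) else 0) else 0) := by
      intro x
      have hconst : ∀ m : Fin 1, ((Equiv.funUnique (Fin 1) ℕ).symm x) m = x := fun m => rfl
      have hcyl : cylw N 0 ((Equiv.funUnique (Fin 1) ℕ).symm x) = 1 := by
        unfold cylw
        simp
      split
      · rename_i hcond
        obtain ⟨h1, h2, h3⟩ := hcond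
        rw [hconst 0] at h2
        rw [hconst (Fin.last 0)] at h3
        rw [hcyl, if_pos h2, if_pos (by omega : p = i)]
      · split
        · split
          · exact zero_le
          · exact le_refl 0
        · exact le_refl 0
    calc (∑' x : ℕ, if (∀ m : Fin 1, j ≤ ((Equiv.funUnique (Fin 1) ℕ).symm x) m)
            ∧ ((Equiv.funUnique (Fin 1) ℕ).symm x) 0 = i
            ∧ ((Equiv.funUnique (Fin 1) ℕ).symm x) (Fin.last 0) = p
          then cylw N 0 ((Equiv.funUnique (Fin 1) ℕ).symm x) else 0)
        ≤ ∑' x : ℕ, (if x = i then (if p = i then (1:ENNReal) else 0) else 0) :=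
          ENNReal.tsum_le_tsum hev
      _ = (if p = i then (1:ENNReal) else 0) := tsum_ite_eq i _
      _ = vchain N j i 0 p := (vchain_zero N j i p).symm
  | succ n IH =>
    intro p
    rw [← Equiv.tsum_eq (snocEquiv n), ENNReal.tsum_prod']
    -- inner sum over x : pick x = p
    have hx : ∀ b : Fin (n+1) → ℕ,
        (∑' x : ℕ, (if (∀ m, j ≤ (snocEquiv n (b, x)) m) ∧ (snocEquiv n (b, x)) 0 = i
            ∧ (snocEquiv n (b, x)) (Fin.last (n+1)) = p
          then cylw N (n+1) (snocEquiv n (b, x)) else 0))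
        = (if (∀ m, j ≤ b m) ∧ j ≤ p ∧ b 0 = i
            then cylw N n b * transMat N (b (Fin.last n)) p else 0) := by
      intro b
      rw [tsum_eq_single p]
      · -- evaluate at x = p
        have hlast : (snocEquiv n (b, p)) (Fin.last (n+1)) = p := by
          show (Fin.snoc b p : Fin (n+2) → ℕ) (Fin.last (n+1)) = p
          exact Fin.snoc_last _ _
        have hzero : (snocEquiv n (b, p)) 0 = b 0 := by
          show (Fin.snoc b p : Fin (n+2) → ℕ) 0 = b 0
          rw [show (0 : Fin (n+2)) = Fin.castSucc 0 from rfl, Fin.snoc_castSucc]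
        have hall : (∀ m, j ≤ (snocEquiv n (b, p)) m) ↔ ((∀ m, j ≤ b m) ∧ j ≤ p) := by
          show (∀ m, j ≤ (Fin.snoc b p : Fin (n+2) → ℕ) m) ↔ _
          rw [Fin.forall_fin_succ']
          constructor
          · rintro ⟨h1, h2⟩
            refine ⟨fun m => ?_, ?_⟩
            · have := h1 m
              rwa [Fin.snoc_castSucc] at this
            · rwa [Fin.snoc_last] at h2
          · rintro ⟨h1, h2⟩
            refine ⟨fun m => ?_, ?_⟩
            · rw [Fin.snoc_castSucc]; exact h1 m
            · rwa [Fin.snoc_last]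
        have hcyl : cylw N (n+1) (snocEquiv n (b, p)) = cylw N n b * transMat N (b (Fin.last n)) p :=
          cylw_snoc N n b p
        by_cases hc : (∀ m, j ≤ b m) ∧ j ≤ p ∧ b 0 = i
        · rw [if_pos, if_pos hc]
          · exact hcyl
          · exact ⟨hall.2 ⟨hc.1, hc.2.1⟩, by rw [hzero]; exact hc.2.2, hlast⟩
        · rw [if_neg, if_neg hc]
          intro hcond
          apply hc
          obtain ⟨h1, h2, _⟩ := hcond
          have := hall.1 h1
          rw [hzero] at h2
          exact ⟨this.1, this.2, h2⟩
      · -- x ≠ p gives 0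
        intro x hx'
        apply if_neg
        intro hcond
        apply hx'
        have := hcond.2.2
        rwa [show (snocEquiv n (b, x)) (Fin.last (n+1)) = x from by
          show (Fin.snoc b x : Fin (n+2) → ℕ) (Fin.last (n+1)) = x
          exact Fin.snoc_last _ _] at this
    rw [tsum_congr hx]
    -- pull out the j ≤ p condition and regroup by q = b (last n)
    by_cases hp : j ≤ p
    · have he : ∀ b : Fin (n+1) → ℕ,
          (if (∀ m, j ≤ b m) ∧ j ≤ p ∧ b 0 = i
            then cylw N n b * transMat N (b (Fin.last n)) p else 0)
          = ∑' q : ℕ, (if q = b (Fin.last n) then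
              (if (∀ m, j ≤ b m) ∧ b 0 = i ∧ b (Fin.last n) = q then cylw N n b else 0)
                * transMat N q p else 0) := by
        intro b
        rw [tsum_eq_single (b (Fin.last n))]
        · rw [if_pos rfl]
          by_cases hc : (∀ m, j ≤ b m) ∧ b 0 = i
          · rw [if_pos ⟨hc.1, hp, hc.2⟩, if_pos ⟨hc.1, hc.2, rfl⟩]
          · rw [if_neg, if_neg]
            · simp
            · intro h; exact hc ⟨h.1, h.2.1⟩
            · intro h; exact hc ⟨h.1, h.2.2⟩
        · intro q hq
          exact if_neg (fun h => hq h)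
      rw [tsum_congr he, ENNReal.tsum_comm]
      have hinner : ∀ q : ℕ,
          (∑' b : Fin (n+1) → ℕ, (if q = b (Fin.last n) then
              (if (∀ m, j ≤ b m) ∧ b 0 = i ∧ b (Fin.last n) = q then cylw N n b else 0)
                * transMat N q p else 0))
          ≤ vchain N j i n q * transMat N q p := by
        intro q
        have step : ∀ b : Fin (n+1) → ℕ, (if q = b (Fin.last n) then
              (if (∀ m, j ≤ b m) ∧ b 0 = i ∧ b (Fin.last n) = q then cylw N n b else 0)
                * transMat N q p else 0)
            ≤ (if (∀ m, j ≤ b m) ∧ b 0 = i ∧ b (Fin.last n) = q then cylw N n b else 0)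
                * transMat N q p := by
          intro b
          split
          · exact le_refl _
          · exact zero_le
        calc (∑' b : Fin (n+1) → ℕ, (if q = b (Fin.last n) then
              (if (∀ m, j ≤ b m) ∧ b 0 = i ∧ b (Fin.last n) = q then cylw N n b else 0)
                * transMat N q p else 0))
            ≤ ∑' b : Fin (n+1) → ℕ,
              (if (∀ m, j ≤ b m) ∧ b 0 = i ∧ b (Fin.last n) = q then cylw N n b else 0)
                * transMat N q p := ENNReal.tsum_le_tsum step
          _ = (∑' b : Fin (n+1) → ℕ,
              (if (∀ m, j ≤ b m) ∧ b 0 = i ∧ b (Fin.last n) = q then cylw N n b else 0))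
                * transMat N q p := ENNReal.tsum_mul_right
          _ ≤ vchain N j i n q * transMat N q p :=
              mul_le_mul_left (IH q) _
      calc (∑' q : ℕ, ∑' b : Fin (n+1) → ℕ, (if q = b (Fin.last n) then
              (if (∀ m, j ≤ b m) ∧ b 0 = i ∧ b (Fin.last n) = q then cylw N n b else 0)
                * transMat N q p else 0))
          ≤ ∑' q : ℕ, vchain N j i n q * transMat N q p := ENNReal.tsum_le_tsum hinner
        _ = vchain N j i (n+1) p := by rw [vchain_succ, if_pos hp]
    · have hz : ∀ b : Fin (n+1) → ℕ,
          (if (∀ m, j ≤ b m) ∧ j ≤ p ∧ b 0 = i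
            then cylw N n b * transMat N (b (Fin.last n)) p else 0) = 0 := by
        intro b
        apply if_neg
        intro h
        exact hp h.2.1
      rw [tsum_congr hz]
      simp

end HTB

namespace HTB
open Finset

lemma cover (N j i : ℕ) {Ω : Type u} [MeasurableSpace Ω] (P : Measure Ω) (R : ℕ → Ω → ℕ)
    (hmc : IsMarkovChainWith P R i (transMat N)) (hji : j ≤ i) (n : ℕ) :
    P {ω | ∀ m ≤ n, j ≤ R m ω} ≤ ∑' p, vchain N j i n p := by
  classical
  set qa : (Fin (n+1) → ℕ) → ℕ → ℕ :=
    fun a m => if h : m < n+1 then a ⟨m, h⟩ else 0 with hqa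
  set s : (Fin (n+1) → ℕ) → Set Ω := fun a =>
    if (∀ m, j ≤ a m) then {ω | ∀ m ≤ n, R m ω = qa a m} else ∅ with hs
  have hsub : {ω | ∀ m ≤ n, j ≤ R m ω} ⊆ ⋃ a, s a := by
    intro ω hω
    refine Set.mem_iUnion.2 ⟨fun m => R (m:ℕ) ω, ?_⟩
    have hcond : ∀ m : Fin (n+1), j ≤ R (m:ℕ) ω := fun m => hω (m:ℕ) (by omega)
    have hseq : s (fun m => R (m:ℕ) ω)
        = {ω' | ∀ m ≤ n, R m ω' = qa (fun m' : Fin (n+1) => R (m':ℕ) ω) m} := by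
      rw [hs]
      exact if_pos hcond
    rw [hseq]
    intro m hm
    have hlt : m < n+1 := by omega
    show R m ω = qa (fun m' : Fin (n+1) => R (m':ℕ) ω) m
    rw [hqa]
    simp only [dif_pos hlt]
  have hPs : ∀ a, P (s a) = (if (∀ m, j ≤ a m) ∧ a 0 = i then cylw N n a else 0) := by
    intro a
    by_cases hc : ∀ m, j ≤ a m
    · have hseq : s a = {ω | ∀ m ≤ n, R m ω = qa a m} := by rw [hs]; exact if_pos hc
      rw [hseq, hmc n (qa a)]
      have hq0 : qa a 0 = a 0 := by
        rw [hqa]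
        simp only [dif_pos (by omega : 0 < n+1)]
        rfl
      have hprod : ∏ m ∈ Finset.range n, transMat N (qa a m) (qa a (m+1)) = cylw N n a := by
        unfold cylw
        rw [← Fin.prod_univ_eq_prod_range (fun m => transMat N (qa a m) (qa a (m+1))) n]
        apply Finset.prod_congr rfl
        intro m _
        have hlt1 : (m:ℕ) < n+1 := by omega
        have hlt2 : (m:ℕ)+1 < n+1 := by omega
        congr 1
        · show qa a (m:ℕ) = a m.castSucc
          rw [hqa]
          simp only [dif_pos hlt1]
          rfl
        · show qa a ((m:ℕ)+1) = a m.succ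
          rw [hqa]
          simp only [dif_pos hlt2]
          rfl
      rw [hq0, hprod]
      by_cases h0 : a 0 = i
      · rw [if_pos h0, if_pos ⟨hc, h0⟩, one_mul]
      · rw [if_neg h0, if_neg (fun h => h0 h.2), zero_mul]
    · have hseq : s a = ∅ := by rw [hs]; exact if_neg hc
      rw [hseq, measure_empty, if_neg (fun h => hc h.1)]
  calc P {ω | ∀ m ≤ n, j ≤ R m ω}
      ≤ P (⋃ a, s a) := measure_mono hsub
    _ ≤ ∑' a, P (s a) := measure_iUnion_le s
    _ = ∑' a : Fin (n+1) → ℕ, (if (∀ m, j ≤ a m) ∧ a 0 = i then cylw N n a else 0) :=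
        tsum_congr hPs
    _ = ∑' a : Fin (n+1) → ℕ, ∑' p : ℕ,
        (if (∀ m, j ≤ a m) ∧ a 0 = i ∧ a (Fin.last n) = p then cylw N n a else 0) := by
        apply tsum_congr
        intro a
        rw [tsum_eq_single (a (Fin.last n))]
        · by_cases hc : (∀ m, j ≤ a m) ∧ a 0 = i
          · rw [if_pos hc, if_pos (show (∀ m, j ≤ a m) ∧ a 0 = i ∧ a (Fin.last n) = a (Fin.last n)
              from ⟨hc.1, hc.2, rfl⟩)]
          · rw [if_neg hc, if_neg (show ¬((∀ m, j ≤ a m) ∧ a 0 = i ∧ a (Fin.last n) = a (Fin.last n))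
              from fun h => hc ⟨h.1, h.2.1⟩)]
        · intro p hp
          exact if_neg (fun h => hp h.2.2.symm)
    _ = ∑' p : ℕ, ∑' a : Fin (n+1) → ℕ,
        (if (∀ m, j ≤ a m) ∧ a 0 = i ∧ a (Fin.last n) = p then cylw N n a else 0) :=
        ENNReal.tsum_comm
    _ ≤ ∑' p, vchain N j i n p := ENNReal.tsum_le_tsum (tuple_sum N j i hji n)

lemma uE_le (N j i : ℕ) (hj : 4 ≤ j) : uE N j i ≤ ENNReal.ofReal (15 * N / j) := by
  unfold uE upot
  apply ENNReal.ofReal_le_ofReal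
  have hj1 : (0:ℝ) < ((j-1:ℕ):ℝ) := by exact_mod_cast (show 0 < j - 1 by omega)
  have hjR : (4:ℝ) ≤ (j:ℝ) := by exact_mod_cast hj
  have hm : (0:ℝ) < ((max i (j-1):ℕ):ℝ) := by exact_mod_cast (show 0 < max i (j-1) by omega)
  have h1 : 11 * (N:ℝ) * (1/((j-1:ℕ):ℝ) - 1/((max i (j-1):ℕ):ℝ)) ≤ 11 * (N:ℝ) * (1/((j-1:ℕ):ℝ)) := by
    apply mul_le_mul_of_nonneg_left _ (by positivity)
    have : (0:ℝ) < 1/((max i (j-1):ℕ):ℝ) := by positivity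
    linarith
  have h2 : 11 * (N:ℝ) * (1/((j-1:ℕ):ℝ)) ≤ 15 * N / j := by
    have hcast : ((j-1:ℕ):ℝ) = (j:ℝ) - 1 := by
      push_cast [Nat.cast_sub (by omega : 1 ≤ j)]
      ring
    rw [hcast]
    have hN0 : (0:ℝ) ≤ N := Nat.cast_nonneg N
    rw [show 11 * (N:ℝ) * (1 / ((j:ℝ) - 1)) = 11 * N / ((j:ℝ)-1) by ring,
      div_le_div_iff₀ (by linarith) (by linarith)]
    nlinarith
  linarith

end HTB


set_option maxHeartbeats 1000000 in
/-- There is a constant `χ₃ > 0` such that for all `4 ≤ j ≤ i ≤ N` with `j ≤ N^{2/5}`, the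
expected hitting time of the chain `R^{(N,i)}` satisfies `E[τ_j^{(N,i)}] ≤ χ₃ N/j`, where
`τ_j^{(N,i)} = inf{n ≥ 0 : R_n < j}`. -/
theorem expected_hitting_time_bound :
    ∃ χ₃ : ℝ, 0 < χ₃ ∧
      ∀ (N j i : ℕ), 4 ≤ j → j ≤ i → i ≤ N → (j : ℝ) ≤ (N : ℝ) ^ ((2 : ℝ) / 5) →
      ∀ (Ω : Type u) (_ : MeasurableSpace Ω) (P : Measure Ω), IsProbabilityMeasure P →
      ∀ (R : ℕ → Ω → ℕ), IsMarkovChainWith P R i (transMat N) →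
        (∫⁻ ω, ((sInf {n | R n ω < j} : ℕ) : ENNReal) ∂P) ≤
          ENNReal.ofReal (χ₃ * (N : ℝ) / (j : ℝ)) := by
  classical
  refine ⟨15, by norm_num, ?_⟩
  intro N j i hj hji hiN hrpow Ω inst P hP R hmc
  have hN5 : j^5 ≤ N^2 := by
    have h1 : (j:ℝ)^(5:ℕ) ≤ ((N:ℝ)^((2:ℝ)/5))^(5:ℕ) :=
      pow_le_pow_left₀ (Nat.cast_nonneg j) hrpow 5
    have h2 : ((N:ℝ)^((2:ℝ)/5))^(5:ℕ) = (N:ℝ)^(2:ℕ) := by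
      rw [← Real.rpow_natCast ((N:ℝ)^((2:ℝ)/5)) 5, ← Real.rpow_mul (Nat.cast_nonneg N)]
      rw [show ((2:ℝ)/5)*(5:ℕ) = ((2:ℕ):ℝ) by norm_num, Real.rpow_natCast]
    rw [h2] at h1
    exact_mod_cast h1
  set S : ℕ → Set Ω := fun n => {ω | ∀ m ≤ n, j ≤ R m ω} with hS
  set T : ℕ → Set Ω := fun n => ⋂ m ∈ Finset.range (n+1), toMeasurable P (S m) with hT
  have hTmeas : ∀ n, MeasurableSet (T n) := fun n =>
    Finset.measurableSet_biInter _ (fun m _ => measurableSet_toMeasurable P (S m))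
  have hST : ∀ n, S n ⊆ T n := by
    intro n
    apply Set.subset_iInter₂
    intro m hm
    rw [Finset.mem_range] at hm
    refine subset_trans ?_ (subset_toMeasurable P (S m))
    intro ω hω
    intro k hk
    exact hω k (by omega)
  have hPT : ∀ n, P (T n) ≤ P (S n) := by
    intro n
    calc P (T n) ≤ P (toMeasurable P (S n)) := by
          apply measure_mono
          apply Set.iInter₂_subset n
          · rw [Finset.mem_range]; omega
      _ = P (S n) := measure_toMeasurable _
  have hpt : ∀ ω, ((sInf {n | R n ω < j} : ℕ) : ENNReal)
      ≤ ∑' n, (T n).indicator (fun _ => (1:ENNReal)) ω := by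
    intro ω
    set τ := sInf {n | R n ω < j} with hτ
    have hmem : ∀ n < τ, ω ∈ T n := by
      intro n hn
      apply hST n
      intro m hm
      by_contra hl
      push_neg at hl
      have : τ ≤ m := Nat.sInf_le hl
      omega
    calc ((τ:ℕ):ENNReal) = ∑ n ∈ Finset.range τ, (1:ENNReal) := by simp
      _ = ∑ n ∈ Finset.range τ, (T n).indicator (fun _ => (1:ENNReal)) ω := by
          apply Finset.sum_congr rfl
          intro n hn
          rw [Set.indicator_of_mem (hmem n (Finset.mem_range.1 hn))]
      _ ≤ ∑' n, (T n).indicator (fun _ => (1:ENNReal)) ω :=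
          Summable.sum_le_tsum _ (fun _ _ => zero_le) ENNReal.summable
  calc ∫⁻ ω, ((sInf {n | R n ω < j} : ℕ) : ENNReal) ∂P
      ≤ ∫⁻ ω, ∑' n, (T n).indicator (fun _ => (1:ENNReal)) ω ∂P := lintegral_mono hpt
    _ = ∑' n, ∫⁻ ω, (T n).indicator (fun _ => (1:ENNReal)) ω ∂P :=
        lintegral_tsum (fun n => ((measurable_const).indicator (hTmeas n)).aemeasurable)
    _ = ∑' n, P (T n) := by
        apply tsum_congr
        intro n
        rw [lintegral_indicator (hTmeas n)]
        simp
    _ ≤ ∑' n, ∑' p, HTB.vchain N j i n p := by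
        apply ENNReal.tsum_le_tsum
        intro n
        exact le_trans (hPT n) (HTB.cover N j i P R hmc hji n)
    _ ≤ HTB.uE N j i := HTB.vchain_total N j i hj hji hiN hN5
    _ ≤ ENNReal.ofReal (15 * (N:ℝ) / (j:ℝ)) := HTB.uE_le N j i hj
end

section
/- For an integer N ≥ 2 define g_N(s) = s − N + N(1 − 1/N)^s for real s ≥ 0. Then: (i) there exists a constant χ > 0 (independent of N) such that for every N ≥ 2 and every real s with 1 ≤ s ≤ N, g_N(s) ≥ (s−1)²/(χN); (ii) for every N ≥ 2 and every real s ≥ 0, g_N(s) ≤ s²/(2N). In particular g_N is nonnegative and increasing on [1, ∞). -/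
lemma aux_exp_le (x : ℝ) (hx : 0 ≤ x) : Real.exp (-x) ≤ 1 - x + x ^ 2 / 2 := by
  set F : ℝ → ℝ := fun y => (1 - y + y ^ 2 / 2) * Real.exp y with hFdef
  have hF : ∀ y : ℝ, HasDerivAt F (y ^ 2 / 2 * Real.exp y) y := by
    intro y
    have h1 : HasDerivAt (fun y : ℝ => 1 - y + y ^ 2 / 2) (-1 + y) y := by
      have := ((hasDerivAt_pow 2 y).div_const 2)
      have h0 : HasDerivAt (fun y : ℝ => 1 - y) (-1) y := by
        simpa using (hasDerivAt_id y).const_sub 1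
      exact (h0.add this).congr_deriv (by norm_num)
    have := h1.mul (Real.hasDerivAt_exp y)
    exact this.congr_deriv (by ring)
  have hmono : MonotoneOn F (Set.Ici (0 : ℝ)) := by
    apply monotoneOn_of_deriv_nonneg (convex_Ici 0)
    · exact Continuous.continuousOn (by continuity)
    · exact fun y _ => (hF y).differentiableAt.differentiableWithinAt
    · intro y _
      rw [(hF y).deriv]
      positivity
  have h01 : F 0 ≤ F x := hmono Set.self_mem_Ici hx hx
  have hF0 : F 0 = 1 := by simp [hFdef]
  have hprod : Real.exp (-x) * Real.exp x = 1 := by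
    rw [← Real.exp_add]; simp
  simp only [hFdef] at h01
  norm_num at h01
  nlinarith [Real.exp_pos x, Real.exp_pos (-x), h01, hprod]

lemma aux_exp_ge (x : ℝ) (hx : 0 ≤ x) : 1 - x + x ^ 2 / 2 - x ^ 3 / 6 ≤ Real.exp (-x) := by
  set F : ℝ → ℝ := fun y => Real.exp (-y) - (1 - y + y ^ 2 / 2 - y ^ 3 / 6) with hFdef
  have hF : ∀ y : ℝ, HasDerivAt F (-Real.exp (-y) + (1 - y + y ^ 2 / 2)) y := by
    intro y
    have he : HasDerivAt (fun y : ℝ => Real.exp (-y)) (-Real.exp (-y)) y := by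
      have := (Real.hasDerivAt_exp (-y)).comp y (hasDerivAt_neg y)
      simpa [Function.comp_def] using this
    have hp : HasDerivAt (fun y : ℝ => 1 - y + y ^ 2 / 2 - y ^ 3 / 6)
        (-1 + y - y ^ 2 / 2) y := by
      have h2 := (hasDerivAt_pow 2 y).div_const 2
      have h3 := (hasDerivAt_pow 3 y).div_const 6
      have h0 : HasDerivAt (fun y : ℝ => 1 - y) (-1) y := by
        simpa using (hasDerivAt_id y).const_sub 1
      have := (h0.add h2).sub h3
      exact this.congr_deriv (by ring)
    have := he.sub hp
    exact this.congr_deriv (by ring)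
  have hmono : MonotoneOn F (Set.Ici (0 : ℝ)) := by
    apply monotoneOn_of_deriv_nonneg (convex_Ici 0)
    · apply Continuous.continuousOn
      fun_prop
    · exact fun y _ => (hF y).differentiableAt.differentiableWithinAt
    · intro y hy
      rw [(hF y).deriv]
      have hy0 : (0:ℝ) ≤ y := le_of_lt (by simpa using hy)
      have := aux_exp_le y hy0
      linarith
  have h01 : F 0 ≤ F x := hmono Set.self_mem_Ici hx hx
  have hF0 : F 0 = 0 := by simp [hFdef]
  simp only [hFdef] at h01
  norm_num at h01
  linarith



/-- For an integer `N ≥ 2` and real `s ≥ 0`, `g_N(s) = s − N + N(1 − 1/N)^s`,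
where `(1 − 1/N)^s = exp (s log (1 − 1/N))`. -/
noncomputable def gFun (N : ℕ) (s : ℝ) : ℝ :=
  s - N + N * Real.exp (s * Real.log (1 - 1 / (N : ℝ)))

lemma gFun_facts (N : ℕ) (hN : 2 ≤ N) :
    ∃ b : ℝ, (∀ s : ℝ, gFun N s = s - N + N * Real.exp (-(s * b))) ∧
      1 ≤ (N : ℝ) * b ∧ ((N : ℝ) - 1) * b < 1 ∧ 0 < b ∧
      Real.exp (-b) = 1 - 1 / (N : ℝ) := by
  have hN2 : (2:ℝ) ≤ (N:ℝ) := by exact_mod_cast hN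
  have hNpos : (0:ℝ) < (N:ℝ) := by linarith
  have hinv : 1/(N:ℝ) ≤ 1/2 := by
    apply div_le_div_of_nonneg_left <;> linarith
  have ha : 0 < 1 - 1/(N:ℝ) := by linarith
  have hNne : (N:ℝ) ≠ 0 := ne_of_gt hNpos
  refine ⟨-Real.log (1 - 1/(N:ℝ)), ?_, ?_, ?_, ?_, ?_⟩
  · intro s
    unfold gFun
    rw [show -(s * -Real.log (1 - 1/(N:ℝ))) = s * Real.log (1 - 1/(N:ℝ)) by ring]
  · have h := Real.log_le_sub_one_of_pos ha
    have : Real.log (1 - 1/(N:ℝ)) ≤ -(1/(N:ℝ)) := by linarith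
    have h2 : 1/(N:ℝ) ≤ -Real.log (1 - 1/(N:ℝ)) := by linarith
    calc (1:ℝ) = (N:ℝ) * (1/(N:ℝ)) := by field_simp
    _ ≤ (N:ℝ) * (-Real.log (1 - 1/(N:ℝ))) := by
        apply mul_le_mul_of_nonneg_left h2 (le_of_lt hNpos)
  · have hainv : (0:ℝ) < (1 - 1/(N:ℝ))⁻¹ := by positivity
    have hane : (1 - 1/(N:ℝ))⁻¹ ≠ 1 := by
      intro h
      rw [inv_eq_one] at h
      have hp : 0 < 1/(N:ℝ) := by positivity
      linarith
    have h := Real.log_lt_sub_one_of_pos hainv hane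
    rw [Real.log_inv] at h
    have hN1 : (0:ℝ) < (N:ℝ) - 1 := by linarith
    have hval : (1 - 1/(N:ℝ))⁻¹ - 1 = 1/((N:ℝ)-1) := by
      have heq : (1 - 1/(N:ℝ)) = ((N:ℝ)-1)/(N:ℝ) := by field_simp
      rw [heq, inv_div]
      rw [div_sub_one (by linarith), eq_div_iff (by linarith)]
      field_simp
      ring
    rw [hval] at h
    calc ((N:ℝ) - 1) * -Real.log (1 - 1/(N:ℝ)) < ((N:ℝ)-1) * (1/((N:ℝ)-1)) := by
          exact mul_lt_mul_of_pos_left h hN1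
    _ = 1 := by field_simp
  · have h := Real.log_le_sub_one_of_pos ha
    have : Real.log (1 - 1/(N:ℝ)) ≤ -(1/(N:ℝ)) := by linarith
    have hp : 0 < 1/(N:ℝ) := by positivity
    linarith
  · rw [neg_neg, Real.exp_log ha]


set_option maxHeartbeats 2000000 in
/-- (i) there is a constant `χ > 0` (independent of `N`) such that for every `N ≥ 2` and every
real `1 ≤ s ≤ N`, `g_N(s) ≥ (s−1)²/(χN)`; (ii) for every `N ≥ 2` and every real `s ≥ 0`,
`g_N(s) ≤ s²/(2N)`. In particular `g_N` is nonnegative and (strictly) increasing on `[1, ∞)`. -/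
theorem gFun_bounds :
    (∃ χ : ℝ, 0 < χ ∧ ∀ N : ℕ, 2 ≤ N → ∀ s : ℝ, 1 ≤ s → s ≤ (N : ℝ) →
        (s - 1) ^ 2 / (χ * N) ≤ gFun N s) ∧
    (∀ N : ℕ, 2 ≤ N → ∀ s : ℝ, 0 ≤ s → gFun N s ≤ s ^ 2 / (2 * N)) ∧
    (∀ N : ℕ, 2 ≤ N → ∀ s : ℝ, 1 ≤ s → 0 ≤ gFun N s) ∧
    (∀ N : ℕ, 2 ≤ N → StrictMonoOn (gFun N) (Set.Ici (1 : ℝ))) := by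
  refine ⟨⟨8, by norm_num, ?_⟩, ?_, ?_, ?_⟩
  · -- part (i)
    intro N hN s hs1 hsN
    obtain ⟨b, hg, hNb, hb2, hbpos, hexpb⟩ := gFun_facts N hN
    have hN2 : (2:ℝ) ≤ (N:ℝ) := by exact_mod_cast hN
    have hNpos : (0:ℝ) < (N:ℝ) := by linarith
    set z := b * (s - 1) with hzdef
    have hz0 : 0 ≤ z := mul_nonneg hbpos.le (by linarith)
    have hz1 : z ≤ 1 := by
      have h1 : b * (s - 1) ≤ b * ((N:ℝ) - 1) :=
        mul_le_mul_of_nonneg_left (by linarith) hbpos.le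
      nlinarith [hb2]
    have hE := aux_exp_ge z hz0
    set E := Real.exp (-z) with hEdef
    have hNe : (N:ℝ) * Real.exp (-(s * b)) = ((N:ℝ) - 1) * E := by
      have hsplit : Real.exp (-(s * b)) = Real.exp (-b) * E := by
        rw [hEdef, ← Real.exp_add]
        congr 1
        rw [hzdef]; ring
      rw [hsplit, hexpb]
      field_simp
    rw [hg s, hNe, div_le_iff₀ (by positivity)]
    -- goal : (s-1)^2 ≤ (s - N + (N-1)*E) * (8*N)
    have hA : 0 ≤ (s - 1) - ((N:ℝ) - 1) * z := by
      have h1 : ((N:ℝ)-1) * z = (((N:ℝ)-1) * b) * (s-1) := by rw [hzdef]; ring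
      nlinarith [mul_nonneg (by linarith : (0:ℝ) ≤ 1 - ((N:ℝ)-1)*b)
        (by linarith : (0:ℝ) ≤ s - 1)]
    have hA8 : 0 ≤ 8 * (N:ℝ) * ((s - 1) - ((N:ℝ) - 1) * z) :=
      mul_nonneg (by positivity) hA
    have hB : s - 1 ≤ (N:ℝ) * z := by
      have h1 : (N:ℝ) * z = ((N:ℝ) * b) * (s-1) := by rw [hzdef]; ring
      nlinarith [mul_nonneg (by linarith : (0:ℝ) ≤ (N:ℝ)*b - 1)
        (by linarith : (0:ℝ) ≤ s - 1)]
    have hC : (s-1)^2 ≤ (N:ℝ)^2 * z^2 := by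
      nlinarith [mul_self_le_mul_self (by linarith : (0:ℝ) ≤ s - 1) hB]
    have hz2 : ((N:ℝ)-1) * z ≤ (N:ℝ) - 1 := by nlinarith
    have hlin : (N:ℝ) ≤ 4*((N:ℝ)-1) - (4/3)*(((N:ℝ)-1)*z) := by linarith
    have hD : (N:ℝ)^2 * z^2 ≤ 8*(N:ℝ)*((N:ℝ)-1)*(z^2/2 - z^3/6) := by
      have h1 : (N:ℝ)*z^2 ≤ (4*((N:ℝ)-1) - (4/3)*(((N:ℝ)-1)*z))*z^2 :=
        mul_le_mul_of_nonneg_right hlin (sq_nonneg z)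
      have h2 := mul_le_mul_of_nonneg_left h1 hNpos.le
      nlinarith [h2]
    have hE8 : 8*(N:ℝ)*((N:ℝ)-1)*(1 - z + z^2/2 - z^3/6) ≤ 8*(N:ℝ)*((N:ℝ)-1)*E :=
      mul_le_mul_of_nonneg_left hE (by nlinarith)
    nlinarith [hE8, hA8, hD, hC]
  · -- part (ii)
    intro N hN s hs0
    obtain ⟨b, hg, hNb, hb2, hbpos, hexpb⟩ := gFun_facts N hN
    have hN2 : (2:ℝ) ≤ (N:ℝ) := by exact_mod_cast hN
    have hNpos : (0:ℝ) < (N:ℝ) := by linarith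
    rw [hg s, le_div_iff₀ (by positivity)]
    by_cases hx : s * b ≤ 1
    · have hE := aux_exp_le (s*b) (mul_nonneg hs0 hbpos.le)
      have hNE : (N:ℝ) * Real.exp (-(s*b)) ≤ (N:ℝ) * (1 - s*b + (s*b)^2/2) :=
        mul_le_mul_of_nonneg_left hE hNpos.le
      have hsN' : s ≤ (N:ℝ) := by nlinarith
      have h1 : s * ((N:ℝ)*b) ≤ (N:ℝ) := by nlinarith
      have hkey : 0 ≤ (s * ((N:ℝ)*b - 1)) * (2*(N:ℝ) - (s*((N:ℝ)*b) + s)) :=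
        mul_nonneg (mul_nonneg hs0 (by linarith)) (by linarith)
      nlinarith [hNE, hkey]
    · push_neg at hx
      have h1 : Real.exp (-(s*b)) ≤ Real.exp (-1 : ℝ) :=
        Real.exp_le_exp.2 (by linarith)
      have h2 : Real.exp (-1 : ℝ) ≤ 1/2 := by
        have hp : Real.exp (-1:ℝ) * Real.exp 1 = 1 := by
          rw [← Real.exp_add]; norm_num
        have h3 := Real.add_one_le_exp (1:ℝ)
        nlinarith [Real.exp_pos (-1:ℝ)]
      have h4 : (N:ℝ) * Real.exp (-(s*b)) ≤ (N:ℝ) * (1/2) :=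
        mul_le_mul_of_nonneg_left (h1.trans h2) hNpos.le
      nlinarith [sq_nonneg (s - (N:ℝ))]
  · -- part (iii)
    intro N hN s hs1
    obtain ⟨b, hg, hNb, hb2, hbpos, hexpb⟩ := gFun_facts N hN
    have hN2 : (2:ℝ) ≤ (N:ℝ) := by exact_mod_cast hN
    have hNpos : (0:ℝ) < (N:ℝ) := by linarith
    have hNe : (N:ℝ) * Real.exp (-(s * b)) = ((N:ℝ) - 1) * Real.exp (-(b*(s-1))) := by
      have hsplit : Real.exp (-(s * b)) = Real.exp (-b) * Real.exp (-(b*(s-1))) := by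
        rw [← Real.exp_add]; congr 1; ring
      rw [hsplit, hexpb]
      field_simp
    rw [hg s, hNe]
    have hEz : 1 - b*(s-1) ≤ Real.exp (-(b*(s-1))) := by
      have := Real.add_one_le_exp (-(b*(s-1)))
      linarith
    have hmul : ((N:ℝ)-1)*(1 - b*(s-1)) ≤ ((N:ℝ)-1) * Real.exp (-(b*(s-1))) :=
      mul_le_mul_of_nonneg_left hEz (by linarith)
    have hkey : 0 ≤ (1 - ((N:ℝ)-1)*b) * (s - 1) :=
      mul_nonneg (by linarith) (by linarith)
    nlinarith [hmul, hkey]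
  · -- part (iv)
    intro N hN s hs t ht hst
    obtain ⟨b, hg, hNb, hb2, hbpos, hexpb⟩ := gFun_facts N hN
    have hN2 : (2:ℝ) ≤ (N:ℝ) := by exact_mod_cast hN
    have hNpos : (0:ℝ) < (N:ℝ) := by linarith
    have hs1 : (1:ℝ) ≤ s := hs
    have hw : 0 < t - s := by linarith
    have h3 : Real.exp (-(t*b)) = Real.exp (-(s*b)) * Real.exp (-((t-s)*b)) := by
      rw [← Real.exp_add]; congr 1; ring
    have h1 : 1 - Real.exp (-((t-s)*b)) ≤ (t-s)*b := by
      have := Real.add_one_le_exp (-((t-s)*b))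
      linarith
    have h2 : 0 ≤ 1 - Real.exp (-((t-s)*b)) := by
      have : Real.exp (-((t-s)*b)) ≤ 1 := by
        rw [Real.exp_le_one_iff]
        nlinarith
      linarith
    have h4 : Real.exp (-(s*b)) ≤ Real.exp (-b) :=
      Real.exp_le_exp.2 (by nlinarith)
    have h5 : (N:ℝ) * Real.exp (-b) = (N:ℝ) - 1 := by
      rw [hexpb]; field_simp
    have key : (N:ℝ) * Real.exp (-(s*b)) * (1 - Real.exp (-((t-s)*b))) < t - s := by
      calc (N:ℝ) * Real.exp (-(s*b)) * (1 - Real.exp (-((t-s)*b)))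
          ≤ (N:ℝ) * Real.exp (-b) * (1 - Real.exp (-((t-s)*b))) := by
            apply mul_le_mul_of_nonneg_right _ h2
            exact mul_le_mul_of_nonneg_left h4 hNpos.le
        _ ≤ (N:ℝ) * Real.exp (-b) * ((t-s)*b) := by
            apply mul_le_mul_of_nonneg_left h1
            positivity
        _ = (((N:ℝ)-1)*b) * (t-s) := by rw [← mul_assoc, h5]; ring
        _ < 1 * (t-s) := mul_lt_mul_of_pos_right hb2 hw
        _ = t - s := by ring
    rw [hg s, hg t]
    nlinarith [key, h3]
end
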